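/- arXiv:2411.12726 — 7 statements merged into one kernel-verified Lean document; each statement's English description precedes it below -/
import Mathlib

section
/- Under the Bayesian inverse problem setting, let T : ℝⁿ → ℝⁿ be a C¹ diffeomorphism with det ∇T(m) > 0 for all m and K := T − id. Assume 0 < Zʸ < ∞ and that the functions m ↦ Φʸ(T(m)), m ↦ log det ∇T(m), m ↦ mᵀC⁻¹K(m), and m ↦ K(m)ᵀC⁻¹K(m) are μ-integrable. Then the Kullback–Leibler divergence of μ from the pullback measure T♯μʸ (defined by (T♯μʸ)(A) = μʸ(T(A))) is finite and satisfies KL(μ ‖ T♯μʸ) = ∫ [ Φʸ(T(m)) − log det ∇T(m) + mᵀC⁻¹K(m) + ½ K(m)ᵀC⁻¹K(m) ] dμ(m) + log Zʸ. -/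
open MeasureTheory Matrix Real

noncomputable section

/-- Gaussian measure `N(m₀, C)` on `ℝⁿ`, defined via its Lebesgue density. -/
def gaussianOf {n : ℕ} (m₀ : Fin n → ℝ) (C : Matrix (Fin n) (Fin n) ℝ) :
    Measure (Fin n → ℝ) :=
  volume.withDensity fun m =>
    ENNReal.ofReal (((2 * π) ^ n * C.det) ^ (-(1 : ℝ) / 2) *
      Real.exp (-(1 / 2) * ((m - m₀) ⬝ᵥ C⁻¹ *ᵥ (m - m₀))))

/-- Jacobian matrix of `f : ℝⁿ → ℝᵈ` at `x`. -/
def jac {n d : ℕ} (f : (Fin n → ℝ) → (Fin d → ℝ)) (x : Fin n → ℝ) :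
    Matrix (Fin d) (Fin n) ℝ :=
  Matrix.of fun i j => fderiv ℝ f x (Pi.single j 1) i

/-- Kullback–Leibler divergence `∫ log (dν₁/dν₂) dν₁` (real-valued). -/
def KLdiv {α : Type*} [MeasurableSpace α] (ν₁ ν₂ : Measure α) : ℝ :=
  ∫ x, Real.log ((ν₁.rnDeriv ν₂ x).toReal) ∂ν₁

/-- The potential (negative log-likelihood) `Φʸ(m) = ½ (G(m)−y)ᵀΓ⁻¹(G(m)−y)`. -/
def potential {n d : ℕ} (Γ : Matrix (Fin d) (Fin d) ℝ)
    (G : (Fin n → ℝ) → (Fin d → ℝ)) (y : Fin d → ℝ) (m : Fin n → ℝ) : ℝ :=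
  (1 / 2) * ((G m - y) ⬝ᵥ Γ⁻¹ *ᵥ (G m - y))

/-- The normalization constant `Zʸ = ∫ exp(−Φʸ) dμ`. -/
def Znorm {n d : ℕ} (C : Matrix (Fin n) (Fin n) ℝ) (Γ : Matrix (Fin d) (Fin d) ℝ)
    (G : (Fin n → ℝ) → (Fin d → ℝ)) (y : Fin d → ℝ) : ℝ :=
  ∫ m, Real.exp (-(potential Γ G y m)) ∂(gaussianOf 0 C)

/-- The Bayesian posterior `dμʸ/dμ = exp(−Φʸ)/Zʸ`. -/
def posterior {n d : ℕ} (C : Matrix (Fin n) (Fin n) ℝ) (Γ : Matrix (Fin d) (Fin d) ℝ)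
    (G : (Fin n → ℝ) → (Fin d → ℝ)) (y : Fin d → ℝ) : Measure (Fin n → ℝ) :=
  (gaussianOf 0 C).withDensity fun m =>
    ENNReal.ofReal (Real.exp (-(potential Γ G y m)) / Znorm C Γ G y)

namespace KLaux

lemma dot_mulVec_left {n : ℕ} (A : Matrix (Fin n) (Fin n) ℝ) (x z : Fin n → ℝ) :
    (A *ᵥ x) ⬝ᵥ z = x ⬝ᵥ (Aᵀ *ᵥ z) := by
  rw [dotProduct_comm, Matrix.dotProduct_mulVec, dotProduct_comm,
    ← Matrix.mulVec_transpose]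

lemma cont_quad {α : Type*} [TopologicalSpace α] {n : ℕ} (M : Matrix (Fin n) (Fin n) ℝ)
    {g h : α → Fin n → ℝ} (hg : Continuous g) (hh : Continuous h) :
    Continuous fun x => g x ⬝ᵥ M *ᵥ h x := by
  simp only [dotProduct, Matrix.mulVec]
  exact continuous_finset_sum _ fun i _ =>
    (((continuous_apply i).comp hg).mul (continuous_finset_sum _ fun j _ =>
      (continuous_const.mul ((continuous_apply j).comp hh))))

lemma quad_diff {n : ℕ} {A : Matrix (Fin n) (Fin n) ℝ} (hA : Aᵀ = A) (m t : Fin n → ℝ) :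
    (1/2) * (t ⬝ᵥ A *ᵥ t) - (1/2) * (m ⬝ᵥ A *ᵥ m) =
      m ⬝ᵥ A *ᵥ (t - m) + (1/2) * ((t - m) ⬝ᵥ A *ᵥ (t - m)) := by
  have hsym : ∀ u v : Fin n → ℝ, u ⬝ᵥ A *ᵥ v = v ⬝ᵥ A *ᵥ u := by
    intro u v
    rw [dotProduct_comm, dot_mulVec_left, hA]
  set k := t - m with hk
  have ht : t = m + k := by rw [hk]; abel
  rw [ht, Matrix.mulVec_add, add_dotProduct, dotProduct_add,
    dotProduct_add, hsym k m]
  ring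

lemma posdef_quad_lb {n : ℕ} {M : Matrix (Fin n) (Fin n) ℝ} (hM : M.PosDef) :
    ∃ ε : ℝ, 0 < ε ∧ ∀ x : Fin n → ℝ, ε * (∑ i, x i ^ 2) ≤ x ⬝ᵥ M *ᵥ x := by
  have hpos : ∀ x : Fin n → ℝ, x ≠ 0 → 0 < x ⬝ᵥ M *ᵥ x := by
    intro x hx
    simpa using hM.dotProduct_mulVec_pos hx
  have hcont : Continuous fun x : Fin n → ℝ => x ⬝ᵥ M *ᵥ x :=
    cont_quad M continuous_id continuous_id
  rcases Nat.eq_zero_or_pos n with hn | hn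
  · refine ⟨1, one_pos, fun x => ?_⟩
    subst hn
    simp [dotProduct]
  · set S : Set (Fin n → ℝ) := {x | ∑ i, x i ^ 2 = 1} with hS
    have hScomp : IsCompact S := by
      have hclosed : IsClosed S :=
        isClosed_eq (continuous_finset_sum _ fun i _ => (continuous_apply i).pow 2)
          continuous_const
      refine (isCompact_closedBall (0 : Fin n → ℝ) 1).of_isClosed_subset hclosed ?_
      intro x hx
      simp only [Metric.mem_closedBall, dist_zero_right]
      refine (pi_norm_le_iff_of_nonneg zero_le_one).2 fun i => ?_
      have h1 : x i ^ 2 ≤ 1 := by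
        rw [← hx]
        exact Finset.single_le_sum (fun j _ => sq_nonneg (x j)) (Finset.mem_univ i)
      rw [Real.norm_eq_abs, ← Real.sqrt_one, ← Real.sqrt_sq_eq_abs]
      exact Real.sqrt_le_sqrt h1
    have hSne : S.Nonempty := by
      refine ⟨Pi.single ⟨0, hn⟩ 1, ?_⟩
      simp only [hS, Set.mem_setOf_eq, Pi.single_apply]
      rw [Finset.sum_eq_single ⟨0, hn⟩]
      · simp
      · intro b _ hb; simp [hb]
      · simp
    obtain ⟨x₀, hx₀S, hmin⟩ := hScomp.exists_isMinOn hSne hcont.continuousOn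
    have hx₀ne : x₀ ≠ 0 := by
      intro h
      rw [h] at hx₀S
      simp [hS] at hx₀S
    refine ⟨x₀ ⬝ᵥ M *ᵥ x₀, hpos x₀ hx₀ne, fun x => ?_⟩
    by_cases hx : x = 0
    · simp [hx]
    · have hsum : 0 < ∑ i, x i ^ 2 := by
        rcases (Finset.sum_nonneg (fun i _ => sq_nonneg (x i))).lt_or_eq with h | h
        · exact h
        · exfalso
          apply hx
          funext i
          have := (Finset.sum_eq_zero_iff_of_nonneg (fun j _ => sq_nonneg (x j))).1 h.symm i
            (Finset.mem_univ i)
          exact sq_eq_zero_iff.mp this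
      set r : ℝ := Real.sqrt (∑ i, x i ^ 2) with hr
      have hrpos : 0 < r := Real.sqrt_pos.2 hsum
      have hr2 : r ^ 2 = ∑ i, x i ^ 2 := Real.sq_sqrt hsum.le
      have hyS : (r⁻¹ • x) ∈ S := by
        simp only [hS, Set.mem_setOf_eq, Pi.smul_apply, smul_eq_mul, mul_pow]
        rw [← Finset.mul_sum, ← hr2]
        field_simp
      have hy : x₀ ⬝ᵥ M *ᵥ x₀ ≤ (r⁻¹ • x) ⬝ᵥ M *ᵥ (r⁻¹ • x) := hmin hyS
      have hquad : (r⁻¹ • x) ⬝ᵥ M *ᵥ (r⁻¹ • x) = r⁻¹ * (r⁻¹ * (x ⬝ᵥ M *ᵥ x)) := by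
        rw [Matrix.mulVec_smul, dotProduct_smul, smul_dotProduct]
        simp [smul_eq_mul, mul_assoc]
      rw [hquad] at hy
      have : (x₀ ⬝ᵥ M *ᵥ x₀) * (r * r) ≤ x ⬝ᵥ M *ᵥ x := by
        have h2 := mul_le_mul_of_nonneg_left hy (by positivity : (0:ℝ) ≤ r * r)
        calc (x₀ ⬝ᵥ M *ᵥ x₀) * (r * r) = (r * r) * (x₀ ⬝ᵥ M *ᵥ x₀) := by ring
        _ ≤ (r * r) * (r⁻¹ * (r⁻¹ * (x ⬝ᵥ M *ᵥ x))) := h2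
        _ = x ⬝ᵥ M *ᵥ x := by field_simp
      calc x₀ ⬝ᵥ M *ᵥ x₀ * ∑ i, x i ^ 2 = x₀ ⬝ᵥ M *ᵥ x₀ * (r * r) := by
            rw [← hr2]; ring
      _ ≤ x ⬝ᵥ M *ᵥ x := this

lemma integrable_exp_neg_mul_sum {n : ℕ} {b : ℝ} (hb : 0 < b) :
    Integrable (fun v : Fin n → ℝ => Real.exp (-b * ∑ i, v i ^ 2)) := by
  have h := (GaussianFourier.integrable_cexp_neg_mul_sum_add (ι := Fin n) (b := (b:ℂ))
    (by simpa) fun _ => (0:ℂ))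
  have h2 := h.norm
  refine h2.congr ?_
  filter_upwards with v
  have : (-(b:ℂ) * ∑ i, (v i:ℂ)^2 + ∑ i, (0:ℂ) * (v i : ℂ)) = ((-b * ∑ i, v i ^2 : ℝ) : ℂ) := by
    push_cast
    simp
  rw [this]
  rw [Complex.norm_exp, Complex.ofReal_re]

lemma map_withDensity_comp {α β : Type*} [MeasurableSpace α] [MeasurableSpace β]
    (μ : Measure α) {f : α → β} (hf : Measurable f) {g : β → ENNReal} (hg : Measurable g) :
    (μ.withDensity (fun x => g (f x))).map f = (μ.map f).withDensity g := by
  ext s hs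
  rw [Measure.map_apply hf hs, withDensity_apply _ (hf hs), withDensity_apply _ hs,
    setLIntegral_map hs hg hf]

lemma gaussian_density_integrable {n : ℕ} {C : Matrix (Fin n) (Fin n) ℝ} (hC : C.PosDef) :
    Integrable (fun m : Fin n → ℝ =>
      ((2 * π) ^ n * C.det) ^ (-(1:ℝ)/2) * Real.exp (-(1/2) * (m ⬝ᵥ C⁻¹ *ᵥ m))) := by
  obtain ⟨ε, hε, hlb⟩ := posdef_quad_lb hC.inv
  set c : ℝ := ((2 * π) ^ n * C.det) ^ (-(1:ℝ)/2) with hc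
  have hbase : 0 < (2 * π) ^ n * C.det := by
    have := hC.det_pos
    positivity
  have hcpos : 0 < c := Real.rpow_pos_of_pos hbase _
  have hcont : Continuous fun m : Fin n → ℝ => c * Real.exp (-(1/2) * (m ⬝ᵥ C⁻¹ *ᵥ m)) :=
    continuous_const.mul (Real.continuous_exp.comp
      (continuous_const.mul (cont_quad C⁻¹ continuous_id continuous_id)))
  refine Integrable.mono' (((integrable_exp_neg_mul_sum (half_pos hε)).const_mul c))
    hcont.aestronglyMeasurable ?_
  filter_upwards with m
  rw [Real.norm_eq_abs, abs_of_pos (by positivity)]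
  refine mul_le_mul_of_nonneg_left (Real.exp_le_exp.2 ?_) hcpos.le
  nlinarith [hlb m]

open scoped MatrixOrder in
lemma gaussian_integral_one {n : ℕ} {C : Matrix (Fin n) (Fin n) ℝ} (hC : C.PosDef) :
    ∫ m : Fin n → ℝ,
      ((2 * π) ^ n * C.det) ^ (-(1:ℝ)/2) * Real.exp (-(1/2) * (m ⬝ᵥ C⁻¹ *ᵥ m)) = 1 := by
  classical
  set c : ℝ := ((2 * π) ^ n * C.det) ^ (-(1:ℝ)/2) with hc
  set f : (Fin n → ℝ) → ℝ := fun m => c * Real.exp (-(1/2) * (m ⬝ᵥ C⁻¹ *ᵥ m)) with hf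
  set S := CFC.sqrt C with hSdef
  have hSh : Sᵀ = S := by
    have := (Matrix.nonneg_iff_posSemidef.mp (CFC.sqrt_nonneg C)).1
    rwa [Matrix.IsHermitian, Matrix.conjTranspose_eq_transpose_of_trivial] at this
  have hSS : S * S = C := CFC.sqrt_mul_sqrt_self C hC.posSemidef.nonneg
  have hdetS2 : S.det * S.det = C.det := by rw [← Matrix.det_mul, hSS]
  have hdetC : 0 < C.det := hC.det_pos
  have hdetS : S.det ≠ 0 := by
    intro h
    rw [h, mul_zero] at hdetS2
    exact hdetC.ne hdetS2
  have hfc : Continuous f :=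
    continuous_const.mul (Real.continuous_exp.comp
      (continuous_const.mul (cont_quad C⁻¹ continuous_id continuous_id)))
  have hmap := Real.map_matrix_volume_pi_eq_smul_volume_pi (M := S) hdetS
  have hmeas : AEMeasurable (Matrix.toLin' S) (volume : Measure (Fin n → ℝ)) :=
    (LinearMap.continuous_on_pi _).measurable.aemeasurable
  have h1 : ∫ y, f ((Matrix.toLin' S) y) = |S.det|⁻¹ * ∫ x, f x := by
    rw [← integral_map hmeas hfc.aestronglyMeasurable, hmap, integral_smul_measure,
      ENNReal.toReal_ofReal (by positivity), smul_eq_mul, abs_inv]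
  have hu : IsUnit S.det := isUnit_iff_ne_zero.mpr hdetS
  have hSCS : S * C⁻¹ * S = 1 := by
    rw [← hSS, Matrix.mul_inv_rev, ← Matrix.mul_assoc, Matrix.mul_nonsing_inv _ hu,
      Matrix.one_mul, Matrix.nonsing_inv_mul _ hu]
  have hquadS : ∀ y : Fin n → ℝ, ((S *ᵥ y) ⬝ᵥ C⁻¹ *ᵥ (S *ᵥ y)) = ∑ i, y i ^ 2 := by
    intro y
    rw [dot_mulVec_left, Matrix.mulVec_mulVec, Matrix.mulVec_mulVec, hSh, hSCS,
      Matrix.one_mulVec]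
    simp [dotProduct, sq]
  have h2 : ∫ y, f ((Matrix.toLin' S) y) = c * Real.sqrt (2 * π) ^ n := by
    have hptw : ∀ y : Fin n → ℝ,
        f ((Matrix.toLin' S) y) = c * ∏ i, Real.exp (-(1/2) * y i ^ 2) := by
      intro y
      rw [hf]
      simp only [Matrix.toLin'_apply]
      rw [hquadS y, Finset.mul_sum, Real.exp_sum]
    simp_rw [hptw]
    rw [MeasureTheory.integral_const_mul, MeasureTheory.integral_fintype_prod_volume_eq_pow (ι := Fin n)
      (fun t : ℝ => Real.exp (-(1/2) * t ^ 2))]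
    have hg : ∫ t : ℝ, Real.exp (-(1/2) * t ^ 2) = Real.sqrt (2 * π) := by
      rw [show ∫ t : ℝ, Real.exp (-(1/2) * t ^ 2) = ∫ t : ℝ, Real.exp (-(1/2 : ℝ) * t ^ 2)
          from rfl,
        integral_gaussian (1/2)]
      rw [show π / (1/2 : ℝ) = 2 * π by ring]
    rw [hg, Fintype.card_fin]
  have habs : (0:ℝ) < |S.det| := abs_pos.2 hdetS
  have h3 : ∫ x, f x = |S.det| * (c * Real.sqrt (2 * π) ^ n) := by
    have h5 : |S.det| * (|S.det|⁻¹ * ∫ x, f x) = |S.det| * (c * Real.sqrt (2 * π) ^ n) := by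
      rw [← h1, h2]
    rwa [← mul_assoc, mul_inv_cancel₀ habs.ne', one_mul] at h5
  rw [h3]
  set a : ℝ := |S.det| * Real.sqrt (2 * π) ^ n with ha
  have hapos : 0 < a := by positivity
  have hasq : (2 * π) ^ n * C.det = a ^ 2 := by
    have h1' : Real.sqrt (2 * π) ^ 2 = 2 * π := Real.sq_sqrt (by positivity)
    have h2' : |S.det| ^ 2 = S.det * S.det := by rw [sq_abs, sq]
    calc (2 * π) ^ n * C.det = ((Real.sqrt (2 * π)) ^ 2) ^ n * (S.det * S.det) := by
          rw [h1', hdetS2]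
    _ = a ^ 2 := by rw [ha, mul_pow, h2']; ring
  have hcval : c = a⁻¹ := by
    rw [hc, hasq, ← Real.rpow_natCast a 2, ← Real.rpow_mul hapos.le]
    norm_num [Real.rpow_neg_one]
  rw [hcval, ha]
  field_simp

lemma gaussianOf_isProb {n : ℕ} {C : Matrix (Fin n) (Fin n) ℝ} (hC : C.PosDef) :
    IsProbabilityMeasure (gaussianOf 0 C) := by
  constructor
  rw [gaussianOf, withDensity_apply _ MeasurableSet.univ, Measure.restrict_univ]
  have hrw : (fun m : Fin n → ℝ => ENNReal.ofReal (((2 * π) ^ n * C.det) ^ (-(1:ℝ)/2) *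
      Real.exp (-(1/2) * ((m - 0) ⬝ᵥ C⁻¹ *ᵥ (m - 0))))) =
      fun m => ENNReal.ofReal (((2 * π) ^ n * C.det) ^ (-(1:ℝ)/2) *
      Real.exp (-(1/2) * (m ⬝ᵥ C⁻¹ *ᵥ m))) := by
    funext m
    rw [sub_zero]
  rw [hrw, ← MeasureTheory.ofReal_integral_eq_lintegral_ofReal
    (gaussian_density_integrable hC) (ae_of_all _ fun m =>
      le_of_lt (by have := hC.det_pos; positivity)),
    gaussian_integral_one hC, ENNReal.ofReal_one]

lemma jac_det_eq {n : ℕ} (f : (Fin n → ℝ) → (Fin n → ℝ)) (x : Fin n → ℝ) :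
    (fderiv ℝ f x).det = (jac f x).det := by
  rw [ContinuousLinearMap.det, ← LinearMap.det_toMatrix'
    ((fderiv ℝ f x) : (Fin n → ℝ) →ₗ[ℝ] (Fin n → ℝ))]
  congr 1

end KLaux

open KLaux

/-- The reverse-KL transport objective identity:
`KL(μ ‖ T♯μʸ)` is finite and equals
`∫ [Φʸ(T m) − log det ∇T(m) + mᵀC⁻¹K(m) + ½K(m)ᵀC⁻¹K(m)] dμ(m) + log Zʸ`,
where `K := T − id` and `T♯μʸ` is the pushforward of `μʸ` under `T⁻¹`. -/
theorem rKL_pullback_objective_identity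
    {n d : ℕ} (C : Matrix (Fin n) (Fin n) ℝ) (hC : C.PosDef)
    (Γ : Matrix (Fin d) (Fin d) ℝ) (hΓ : Γ.PosDef)
    (G : (Fin n → ℝ) → (Fin d → ℝ)) (hG : ContDiff ℝ 1 G)
    (y : Fin d → ℝ)
    (T Tinv : (Fin n → ℝ) → (Fin n → ℝ))
    (hT : ContDiff ℝ 1 T) (hTinv : ContDiff ℝ 1 Tinv)
    (hli : Function.LeftInverse Tinv T) (hri : Function.RightInverse Tinv T)
    (hdet : ∀ m, 0 < (jac T m).det)
    (hZ : 0 < Znorm C Γ G y)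
    (hint1 : Integrable (fun m => potential Γ G y (T m)) (gaussianOf 0 C))
    (hint2 : Integrable (fun m => Real.log (jac T m).det) (gaussianOf 0 C))
    (hint3 : Integrable (fun m => m ⬝ᵥ C⁻¹ *ᵥ (T m - m)) (gaussianOf 0 C))
    (hint4 : Integrable (fun m => (T m - m) ⬝ᵥ C⁻¹ *ᵥ (T m - m)) (gaussianOf 0 C)) :
    Integrable (fun m =>
        Real.log (((gaussianOf 0 C).rnDeriv ((posterior C Γ G y).map Tinv) m).toReal))
      (gaussianOf 0 C) ∧
      KLdiv (gaussianOf 0 C) ((posterior C Γ G y).map Tinv) =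
        (∫ m, (potential Γ G y (T m) - Real.log (jac T m).det +
            m ⬝ᵥ C⁻¹ *ᵥ (T m - m) +
            (1 / 2) * ((T m - m) ⬝ᵥ C⁻¹ *ᵥ (T m - m))) ∂(gaussianOf 0 C)) +
          Real.log (Znorm C Γ G y) := by
  classical
  haveI hprob : IsProbabilityMeasure (gaussianOf 0 C) := gaussianOf_isProb hC
  have hbase : 0 < (2 * π) ^ n * C.det := by
    have := hC.det_pos
    positivity
  have hcpos : 0 < ((2 * π) ^ n * C.det) ^ (-(1:ℝ)/2) := Real.rpow_pos_of_pos hbase _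
  set c : ℝ := ((2 * π) ^ n * C.det) ^ (-(1:ℝ)/2) with hc
  set ρ : (Fin n → ℝ) → ℝ := fun m => c * Real.exp (-(1/2) * (m ⬝ᵥ C⁻¹ *ᵥ m)) with hρdef
  have hρpos : ∀ m, 0 < ρ m := fun m => by
    simp only [hρdef]
    positivity
  have hρcont : Continuous ρ :=
    continuous_const.mul (Real.continuous_exp.comp
      (continuous_const.mul (cont_quad C⁻¹ continuous_id continuous_id)))
  have hμ : gaussianOf 0 C = volume.withDensity fun m => ENNReal.ofReal (ρ m) := by
    rw [gaussianOf]
    congr 1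
    funext m
    rw [sub_zero]
  have hΦcont : Continuous (potential Γ G y) := by
    unfold potential
    exact continuous_const.mul
      (cont_quad Γ⁻¹ (hG.continuous.sub continuous_const) (hG.continuous.sub continuous_const))
  have hΦ0 : ∀ m, 0 ≤ potential Γ G y m := by
    intro m
    have h := hΓ.inv.posSemidef.dotProduct_mulVec_nonneg (G m - y)
    simp only [star_trivial] at h
    unfold potential
    positivity
  set e : (Fin n → ℝ) → ℝ := fun m => Real.exp (-(potential Γ G y m)) / Znorm C Γ G y with hedef
  have hepos : ∀ m, 0 < e m := fun m => div_pos (Real.exp_pos _) hZ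
  have hecont : Continuous e := (Real.continuous_exp.comp hΦcont.neg).div_const _
  have hTm : Measurable T := hT.continuous.measurable
  have hTim : Measurable Tinv := hTinv.continuous.measurable
  set J : (Fin n → ℝ) → ℝ := fun m => (jac T m).det with hJdef
  have hJpos : ∀ m, 0 < J m := hdet
  have hJcont : Continuous J := by
    apply Continuous.matrix_det
    apply continuous_matrix
    intro i j
    simp only [jac, Matrix.of_apply]
    exact (continuous_apply i).comp
      (((hT.continuous_fderiv one_ne_zero).clm_apply continuous_const))
  have hJabs : (fun x => ENNReal.ofReal |(fderiv ℝ T x).det|) =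
      fun x => ENNReal.ofReal (J x) := by
    funext x
    rw [jac_det_eq, abs_of_pos (hdet x)]
  have hmapT : Measure.map T (volume.withDensity fun x => ENNReal.ofReal (J x)) = volume := by
    have h0 := map_withDensity_abs_det_fderiv_eq_addHaar (μ := volume) MeasurableSet.univ.nullMeasurableSet
      (fun x _ => ((hT.differentiable one_ne_zero) x).hasFDerivAt.hasFDerivWithinAt)
      hli.injective.injOn
    rw [Measure.restrict_univ, Set.image_univ, hri.surjective.range_eq,
      Measure.restrict_univ, hJabs] at h0
    exact h0
  have hmapTinv : Measure.map Tinv volume =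
      volume.withDensity fun x => ENNReal.ofReal (J x) := by
    conv_lhs => rw [← hmapT]
    rw [Measure.map_map hTim hTm, show Tinv ∘ T = id from funext hli, Measure.map_id]
  have hρmeas : Measurable fun m => ENNReal.ofReal (ρ m) :=
    ENNReal.measurable_ofReal.comp hρcont.measurable
  have hemeas : Measurable fun m => ENNReal.ofReal (e m) :=
    ENNReal.measurable_ofReal.comp hecont.measurable
  have hJmeas : Measurable fun m => ENNReal.ofReal (J m) :=
    ENNReal.measurable_ofReal.comp hJcont.measurable
  have hFmeas : Measurable fun x => ENNReal.ofReal (ρ (T x) * e (T x)) :=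
    ENNReal.measurable_ofReal.comp
      (((hρcont.comp hT.continuous).mul (hecont.comp hT.continuous)).measurable)
  have hpost : posterior C Γ G y = volume.withDensity fun m => ENNReal.ofReal (ρ m * e m) := by
    rw [posterior, hμ, ← withDensity_mul _ hρmeas hemeas]
    congr 1
    funext m
    simp only [Pi.mul_apply]
    rw [ENNReal.ofReal_mul (hρpos m).le]
  set gd : (Fin n → ℝ) → ℝ := fun m => J m * (ρ (T m) * e (T m)) with hgddef
  have hgdpos : ∀ m, 0 < gd m := fun m =>
    mul_pos (hJpos m) (mul_pos (hρpos (T m)) (hepos (T m)))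
  have hgdmeas : Measurable fun m => ENNReal.ofReal (gd m) :=
    ENNReal.measurable_ofReal.comp
      ((hJcont.mul ((hρcont.comp hT.continuous).mul (hecont.comp hT.continuous))).measurable)
  have hν : (posterior C Γ G y).map Tinv =
      volume.withDensity fun m => ENNReal.ofReal (gd m) := by
    rw [hpost,
      show (fun m => ENNReal.ofReal (ρ m * e m)) =
        fun m => ENNReal.ofReal (ρ (T (Tinv m)) * e (T (Tinv m))) from funext fun m => by
          rw [hri m],
      map_withDensity_comp volume hTim hFmeas, hmapTinv, ← withDensity_mul _ hJmeas hFmeas]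
    congr 1
    funext m
    simp only [Pi.mul_apply]
    rw [show gd m = J m * (ρ (T m) * e (T m)) from rfl, ENNReal.ofReal_mul (hJpos m).le]
  haveI hfin1 : IsFiniteMeasure (posterior C Γ G y) := by
    rw [posterior]
    refine isFiniteMeasure_withDensity_ofReal (Integrable.hasFiniteIntegral ?_)
    refine Integrable.mono' (integrable_const (1 / Znorm C Γ G y))
      hecont.aestronglyMeasurable (ae_of_all _ fun m => ?_)
    rw [Real.norm_eq_abs, abs_of_pos (hepos m)]
    have h1 : Real.exp (-(potential Γ G y m)) ≤ 1 :=
      Real.exp_le_one_iff.2 (neg_nonpos.2 (hΦ0 m))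
    simp only [hedef]
    exact (div_le_div_iff_of_pos_right hZ).2 h1
  set w : (Fin n → ℝ) → ENNReal := fun m => ENNReal.ofReal (ρ m) / ENNReal.ofReal (gd m)
    with hwdef
  have hwmeas : Measurable w := hρmeas.div hgdmeas
  have hμν : gaussianOf 0 C = ((posterior C Γ G y).map Tinv).withDensity w := by
    rw [hν, ← withDensity_mul _ hgdmeas hwmeas, hμ]
    congr 1
    funext m
    simp only [hwdef, Pi.mul_apply]
    rw [mul_comm, ENNReal.div_mul_cancel (ENNReal.ofReal_pos.2 (hgdpos m)).ne'
      ENNReal.ofReal_ne_top]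
  have hrn : (gaussianOf 0 C).rnDeriv ((posterior C Γ G y).map Tinv)
      =ᵐ[(posterior C Γ G y).map Tinv] w := by
    rw [hμν]
    exact Measure.rnDeriv_withDensity _ hwmeas
  have hac : gaussianOf 0 C ≪ (posterior C Γ G y).map Tinv := by
    rw [hμν]
    exact withDensity_absolutelyContinuous _ _
  have hrnμ : (gaussianOf 0 C).rnDeriv ((posterior C Γ G y).map Tinv)
      =ᵐ[gaussianOf 0 C] w := hac.ae_eq hrn
  have hCisym : (C⁻¹)ᵀ = C⁻¹ := by
    have h1 : Cᵀ = C := by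
      have := hC.1
      rwa [Matrix.IsHermitian, Matrix.conjTranspose_eq_transpose_of_trivial] at this
    rw [Matrix.transpose_nonsing_inv, h1]
  have hlogw : ∀ m, Real.log ((w m).toReal) =
      (potential Γ G y (T m) - Real.log ((jac T m).det) + m ⬝ᵥ C⁻¹ *ᵥ (T m - m)
        + (1/2) * ((T m - m) ⬝ᵥ C⁻¹ *ᵥ (T m - m))) + Real.log (Znorm C Γ G y) := by
    intro m
    have h1 : (w m).toReal = ρ m / gd m := by
      simp only [hwdef]
      rw [ENNReal.toReal_div, ENNReal.toReal_ofReal (hρpos m).le,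
        ENNReal.toReal_ofReal (hgdpos m).le]
    have hlogρ : ∀ x, Real.log (ρ x) = Real.log c + (-(1/2) * (x ⬝ᵥ C⁻¹ *ᵥ x)) := by
      intro x
      simp only [hρdef]
      rw [Real.log_mul hcpos.ne' (Real.exp_pos _).ne', Real.log_exp]
    have hloge : ∀ x, Real.log (e x) = -(potential Γ G y x) - Real.log (Znorm C Γ G y) := by
      intro x
      simp only [hedef]
      rw [Real.log_div (Real.exp_pos _).ne' hZ.ne', Real.log_exp]
    have hloggd : Real.log (gd m) =
        Real.log (J m) + (Real.log (ρ (T m)) + Real.log (e (T m))) := by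
      simp only [hgddef]
      rw [Real.log_mul (hJpos m).ne' (mul_pos (hρpos (T m)) (hepos (T m))).ne',
        Real.log_mul (hρpos (T m)).ne' (hepos (T m)).ne']
    have hquad := quad_diff hCisym m (T m)
    have hJm : Real.log (J m) = Real.log ((jac T m).det) := by simp only [hJdef]
    rw [h1, Real.log_div (hρpos m).ne' (hgdpos m).ne', hloggd, hlogρ, hlogρ, hloge, hJm]
    linarith [hquad]
  have hLae : (fun m =>
      Real.log (((gaussianOf 0 C).rnDeriv ((posterior C Γ G y).map Tinv) m).toReal))
      =ᵐ[gaussianOf 0 C] fun m =>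
      (potential Γ G y (T m) - Real.log ((jac T m).det) + m ⬝ᵥ C⁻¹ *ᵥ (T m - m)
        + (1/2) * ((T m - m) ⬝ᵥ C⁻¹ *ᵥ (T m - m))) + Real.log (Znorm C Γ G y) := by
    filter_upwards [hrnμ] with m hm
    rw [hm, hlogw m]
  have hFint : Integrable (fun m =>
      potential Γ G y (T m) - Real.log ((jac T m).det) + m ⬝ᵥ C⁻¹ *ᵥ (T m - m)
        + (1/2) * ((T m - m) ⬝ᵥ C⁻¹ *ᵥ (T m - m))) (gaussianOf 0 C) :=
    ((hint1.sub hint2).add hint3).add (hint4.const_mul (1/2))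
  have hconst : Integrable (fun _ : Fin n → ℝ => Real.log (Znorm C Γ G y)) (gaussianOf 0 C) :=
    integrable_const _
  constructor
  · exact (hFint.add hconst).congr hLae.symm
  · rw [KLdiv, integral_congr_ae hLae, integral_add hFint hconst, integral_const]
    simp [measure_univ]
end
end

section
/- Let π = N(0, I_r) be the standard Gaussian measure on ℝʳ. Let Φ : ℝʳ → ℝ be measurable with 0 < Z := ∫ exp(−Φ(z)) dπ(z) < ∞, and let ρ be the probability measure on ℝʳ with density dρ/dπ = exp(−Φ)/Z. Let S : ℝʳ → ℝʳ be a C¹ diffeomorphism with det ∇S(z) > 0 for all z, and assume z ↦ Φ(S(z)), z ↦ ‖S(z)‖², and z ↦ log det ∇S(z) are π-integrable. Then the Kullback–Leibler divergence of the pushforward S#π from ρ is finite and KL(S#π ‖ ρ) = ∫ [ Φ(S(z)) + ½‖S(z)‖² − log det ∇S(z) ] dπ(z) + log Z − r/2. -/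
open MeasureTheory Matrix Real

open Filter

noncomputable section


open scoped ENNReal NNReal

/-- Standard Gaussian `N(0, I_r)` on `ℝʳ`. -/
def stdGaussian (r : ℕ) : Measure (Fin r → ℝ) := gaussianOf 0 1

namespace TMVIaux

/-- 1D standard gaussian density. -/
def phi1 (t : ℝ) : ℝ := (2 * π) ^ (-(1 : ℝ) / 2) * Real.exp (-(1 / 2) * (t * t))

lemma phi1_pos (t : ℝ) : 0 < phi1 t :=
  mul_pos (Real.rpow_pos_of_pos (by positivity) _) (Real.exp_pos _)

lemma continuous_phi1 : Continuous phi1 := by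
  unfold phi1; fun_prop

lemma integrable_exp_half : Integrable (fun t : ℝ => Real.exp (-(1 / 2) * (t * t))) := by
  have := integrable_exp_neg_mul_sq (by norm_num : (0:ℝ) < 1/2)
  simpa [pow_two] using this

lemma integral_exp_half : ∫ t : ℝ, Real.exp (-(1 / 2) * (t * t)) = Real.sqrt (2 * π) := by
  have := integral_gaussian (1/2)
  simp only [pow_two] at this
  rw [this]
  rw [show π / (1/2) = 2 * π by ring]

lemma sqrt_two_pi_rpow : Real.sqrt (2 * π) = (2 * π) ^ ((1 : ℝ) / 2) :=
  Real.sqrt_eq_rpow _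

lemma const_mul_sqrt : (2 * π) ^ (-(1 : ℝ) / 2) * Real.sqrt (2 * π) = 1 := by
  rw [sqrt_two_pi_rpow, ← Real.rpow_add (by positivity)]
  norm_num

lemma integral_phi1 : ∫ t : ℝ, phi1 t = 1 := by
  unfold phi1
  rw [integral_const_mul, integral_exp_half, const_mul_sqrt]

lemma integrable_phi1 : Integrable phi1 := integrable_exp_half.const_mul _

lemma integrable_sq_exp : Integrable (fun t : ℝ => (t * t) * Real.exp (-(1 / 2) * (t * t))) := by
  have := integrable_rpow_mul_exp_neg_mul_sq (by norm_num : (0:ℝ) < 1/2)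
    (by norm_num : (-1:ℝ) < ((2:ℕ):ℝ))
  refine this.congr ?_
  filter_upwards with x
  rw [Real.rpow_natCast]
  ring_nf

lemma hasDerivAt_F (x : ℝ) :
    HasDerivAt (fun x : ℝ => -(x * Real.exp (-(1 / 2) * (x * x))))
      ((x * x - 1) * Real.exp (-(1 / 2) * (x * x))) x := by
  have h1 : HasDerivAt (fun x : ℝ => -(1 / 2) * (x * x)) (-(1 / 2) * (x + x)) x := by
    have := ((hasDerivAt_id x).mul (hasDerivAt_id x)).const_mul (-(1/2) : ℝ)
    simpa [mul_comm, mul_add] using this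
  have h2 := h1.exp
  have h3 := ((hasDerivAt_id x).mul h2).neg
  refine h3.congr_deriv ?_
  simp only [id_eq]
  ring

lemma tendsto_xexp_top :
    Tendsto (fun x : ℝ => x * Real.exp (-(1 / 2) * (x * x))) atTop (nhds 0) := by
  have h := rpow_mul_exp_neg_mul_sq_isLittleO_exp_neg (by norm_num : (0:ℝ) < 1/2) 1
  have h2 : Tendsto (fun x : ℝ => Real.exp (-(1/2) * x)) atTop (nhds 0) := by
    have hl : Tendsto (fun x : ℝ => (1/2) * x) atTop atTop :=
      Tendsto.const_mul_atTop (by norm_num) tendsto_id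
    have := (Real.tendsto_exp_neg_atTop_nhds_zero).comp hl
    refine this.congr fun x => ?_
    simp [Function.comp, neg_mul]
  have h3 := h.isBigO.trans_tendsto h2
  refine h3.congr' ?_
  filter_upwards [eventually_ge_atTop (0:ℝ)] with x _
  rw [Real.rpow_one]
  ring_nf

lemma tendsto_xexp_bot :
    Tendsto (fun x : ℝ => x * Real.exp (-(1 / 2) * (x * x))) atBot (nhds 0) := by
  have h := (tendsto_xexp_top.neg).comp tendsto_neg_atBot_atTop
  rw [show (0:ℝ) = -0 by ring]
  refine Tendsto.congr (fun x => ?_) h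
  simp only [Function.comp_apply, neg_mul_neg]
  ring

lemma integral_sq_exp :
    ∫ x : ℝ, (x * x) * Real.exp (-(1 / 2) * (x * x)) = Real.sqrt (2 * π) := by
  have hint : Integrable (fun x : ℝ => (x * x - 1) * Real.exp (-(1 / 2) * (x * x))) := by
    refine (integrable_sq_exp.sub integrable_exp_half).congr ?_
    filter_upwards with x
    simp only [Pi.sub_apply]
    ring
  have hbot : Tendsto (fun x : ℝ => -(x * Real.exp (-(1 / 2) * (x * x)))) atBot (nhds 0) := by
    simpa using tendsto_xexp_bot.neg
  have htop : Tendsto (fun x : ℝ => -(x * Real.exp (-(1 / 2) * (x * x)))) atTop (nhds 0) := by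
    simpa using tendsto_xexp_top.neg
  have key := MeasureTheory.integral_of_hasDerivAt_of_tendsto hasDerivAt_F hint hbot htop
  simp only [sub_zero, sub_self] at key
  -- key : ∫ (x*x-1) * exp = 0
  have hsplit : ∫ x : ℝ, (x * x - 1) * Real.exp (-(1 / 2) * (x * x)) =
      (∫ x : ℝ, (x * x) * Real.exp (-(1 / 2) * (x * x))) -
        ∫ x : ℝ, Real.exp (-(1 / 2) * (x * x)) := by
    rw [← integral_sub integrable_sq_exp integrable_exp_half]
    congr 1; funext x; ring
  rw [hsplit] at key
  have := integral_exp_half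
  linarith

lemma integral_phi2 : ∫ t : ℝ, (t * t) * phi1 t = 1 := by
  unfold phi1
  have : (fun t : ℝ => (t * t) * ((2 * π) ^ (-(1 : ℝ) / 2) * Real.exp (-(1 / 2) * (t * t))))
      = fun t : ℝ => (2 * π) ^ (-(1 : ℝ) / 2) * ((t * t) * Real.exp (-(1 / 2) * (t * t))) := by
    funext t; ring
  rw [this, integral_const_mul, integral_sq_exp, const_mul_sqrt]

lemma integrable_phi2 : Integrable (fun t : ℝ => (t * t) * phi1 t) := by
  unfold phi1
  have : (fun t : ℝ => (t * t) * ((2 * π) ^ (-(1 : ℝ) / 2) * Real.exp (-(1 / 2) * (t * t))))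
      = fun t : ℝ => (2 * π) ^ (-(1 : ℝ) / 2) * ((t * t) * Real.exp (-(1 / 2) * (t * t))) := by
    funext t; ring
  rw [this]
  exact integrable_sq_exp.const_mul _


/-- closed-form standard gaussian density on `ℝʳ`. -/
def gdens {r : ℕ} (z : Fin r → ℝ) : ℝ :=
  ((2 * π) ^ r : ℝ) ^ (-(1 : ℝ) / 2) * Real.exp (-(1 / 2) * (z ⬝ᵥ z))

lemma gdens_pos {r : ℕ} (z : Fin r → ℝ) : 0 < gdens z :=
  mul_pos (Real.rpow_pos_of_pos (by positivity) _) (Real.exp_pos _)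

lemma continuous_gdens {r : ℕ} : Continuous (gdens (r := r)) := by
  unfold gdens dotProduct
  fun_prop

lemma gdens_prod {r : ℕ} (z : Fin r → ℝ) : gdens z = ∏ i, phi1 (z i) := by
  unfold gdens phi1
  rw [Finset.prod_mul_distrib, Finset.prod_const, ← Real.exp_sum]
  congr 1
  · rw [← Real.rpow_natCast ((2*π) ^ (-(1:ℝ)/2)) (Finset.univ.card), ← Real.rpow_natCast (2*π) r,
      ← Real.rpow_mul (by positivity), ← Real.rpow_mul (by positivity)]
    simp [mul_comm]
  · unfold dotProduct
    rw [Finset.mul_sum]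

lemma stdGaussian_eq (r : ℕ) :
    stdGaussian r = volume.withDensity fun z => ENNReal.ofReal (gdens z) := by
  unfold stdGaussian gaussianOf gdens
  congr 1
  funext z
  simp [Matrix.det_one, Matrix.one_mulVec]

lemma integrable_gdens {r : ℕ} : Integrable (gdens (r := r)) := by
  have : (gdens (r := r)) = fun z => ∏ i, phi1 (z i) := funext gdens_prod
  rw [this]
  exact Integrable.fintype_prod fun _ => integrable_phi1

lemma integral_gdens {r : ℕ} : ∫ z : Fin r → ℝ, gdens z = 1 := by
  have : (gdens (r := r)) = fun z => ∏ i, phi1 (z i) := funext gdens_prod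
  rw [this, MeasureTheory.integral_fintype_prod_volume_eq_prod (f := fun _ : Fin r => phi1)]
  simp [integral_phi1]

instance stdGaussian_isProbability (r : ℕ) : IsProbabilityMeasure (stdGaussian r) := by
  constructor
  rw [stdGaussian_eq, withDensity_apply _ MeasurableSet.univ, Measure.restrict_univ,
    ← MeasureTheory.ofReal_integral_eq_lintegral_ofReal integrable_gdens
      (Filter.Eventually.of_forall fun z => (gdens_pos z).le),
    integral_gdens, ENNReal.ofReal_one]

lemma stdGaussian_eq' (r : ℕ) :
    stdGaussian r = volume.withDensity fun z => (((gdens z).toNNReal : ℝ≥0) : ℝ≥0∞) := by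
  rw [stdGaussian_eq]; rfl

lemma measurable_gdens_toNNReal {r : ℕ} :
    Measurable (fun z : Fin r → ℝ => (gdens z).toNNReal) :=
  continuous_gdens.measurable.real_toNNReal

lemma integrable_stdGaussian_iff {r : ℕ} (g : (Fin r → ℝ) → ℝ) :
    Integrable g (stdGaussian r) ↔ Integrable (fun z => gdens z * g z) volume := by
  rw [stdGaussian_eq', integrable_withDensity_iff_integrable_smul measurable_gdens_toNNReal]
  constructor <;> intro h <;> refine h.congr (Filter.Eventually.of_forall fun z => ?_) <;>
    simp [NNReal.smul_def, Real.coe_toNNReal _ (gdens_pos z).le]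

lemma integral_stdGaussian {r : ℕ} (g : (Fin r → ℝ) → ℝ) :
    ∫ z, g z ∂(stdGaussian r) = ∫ z, gdens z * g z := by
  rw [stdGaussian_eq', integral_withDensity_eq_integral_smul measurable_gdens_toNNReal]
  congr 1
  funext z
  simp [NNReal.smul_def, Real.coe_toNNReal _ (gdens_pos z).le]

/-- coordinate factors for the second moment -/
def psi {r : ℕ} (j i : Fin r) : ℝ → ℝ := if i = j then (fun t => (t * t) * phi1 t) else phi1

lemma psi_integrable {r : ℕ} (j i : Fin r) : Integrable (psi j i) := by
  unfold psi
  split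
  · exact integrable_phi2
  · exact integrable_phi1

lemma psi_integral {r : ℕ} (j i : Fin r) : ∫ t, psi j i t = 1 := by
  unfold psi
  split
  · exact integral_phi2
  · exact integral_phi1

lemma sq_mul_gdens {r : ℕ} (j : Fin r) (z : Fin r → ℝ) :
    (z j * z j) * gdens z = ∏ i, psi j i (z i) := by
  rw [gdens_prod, ← Finset.mul_prod_erase Finset.univ _ (Finset.mem_univ j),
    ← Finset.mul_prod_erase Finset.univ (fun i => psi j i (z i)) (Finset.mem_univ j)]
  have h1 : psi j j (z j) = (z j * z j) * phi1 (z j) := by simp [psi]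
  have h2 : ∀ i ∈ Finset.univ.erase j, psi j i (z i) = phi1 (z i) := by
    intro i hi
    simp [psi, Finset.mem_erase.mp hi |>.1]
  rw [h1, Finset.prod_congr rfl h2]
  ring

lemma dot_mul_gdens {r : ℕ} (z : Fin r → ℝ) :
    gdens z * (z ⬝ᵥ z) = ∑ j, ∏ i, psi j i (z i) := by
  unfold dotProduct
  rw [Finset.mul_sum]
  refine Finset.sum_congr rfl fun j _ => ?_
  rw [← sq_mul_gdens]
  ring

lemma integrable_dot_stdGaussian {r : ℕ} :
    Integrable (fun z : Fin r → ℝ => z ⬝ᵥ z) (stdGaussian r) := by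
  rw [integrable_stdGaussian_iff]
  have : (fun z : Fin r → ℝ => gdens z * (z ⬝ᵥ z))
      = fun z => ∑ j, ∏ i, psi j i (z i) := funext dot_mul_gdens
  rw [this]
  exact integrable_finset_sum _ fun j _ => Integrable.fintype_prod fun i => psi_integrable j i

lemma integral_dot_stdGaussian {r : ℕ} :
    ∫ z, (z ⬝ᵥ z) ∂(stdGaussian r) = (r : ℝ) := by
  rw [integral_stdGaussian]
  have : (fun z : Fin r → ℝ => gdens z * (z ⬝ᵥ z))
      = fun z => ∑ j, ∏ i, psi j i (z i) := funext dot_mul_gdens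
  rw [this, integral_finset_sum (μ := volume) _ fun j _ => Integrable.fintype_prod fun i => psi_integrable j i]
  have : ∀ j : Fin r, (∫ z : Fin r → ℝ, ∏ i, psi j i (z i)) = 1 := by
    intro j
    rw [MeasureTheory.integral_fintype_prod_volume_eq_prod (f := fun i => psi j i)]
    simp [psi_integral]
  simp [this]


lemma map_withDensity_comp {α β : Type*} [MeasurableSpace α] [MeasurableSpace β]
    (μ : Measure α) {f : α → β} (hf : Measurable f) {k : β → ℝ≥0∞} (hk : Measurable k) :
    Measure.map f (μ.withDensity fun x => k (f x)) = (Measure.map f μ).withDensity k := by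
  ext s hs
  rw [Measure.map_apply hf hs, withDensity_apply _ (hf hs), withDensity_apply _ hs,
    MeasureTheory.setLIntegral_map hs hk hf]

end TMVIaux

open TMVIaux

/-- latent-space TMVI objective identity.
For `π = N(0, I_r)`, target `dρ/dπ = exp(−Φ)/Z`, and a `C¹` diffeomorphism `S`
with positive Jacobian determinant, `KL(S#π ‖ ρ)` is finite and equals
`∫ [Φ(S z) + ½‖S z‖² − log det ∇S(z)] dπ(z) + log Z − r/2`. -/
theorem latent_TMVI_objective_identity
    {r : ℕ} (Φ : (Fin r → ℝ) → ℝ) (hΦ : Measurable Φ)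
    (hZpos : 0 < ∫ z, Real.exp (-(Φ z)) ∂(stdGaussian r))
    (S Sinv : (Fin r → ℝ) → (Fin r → ℝ))
    (hS : ContDiff ℝ 1 S) (hSinv : ContDiff ℝ 1 Sinv)
    (hli : Function.LeftInverse Sinv S) (hri : Function.RightInverse Sinv S)
    (hdet : ∀ z, 0 < (jac S z).det)
    (hΦint : Integrable (fun z => Φ (S z)) (stdGaussian r))
    (hSint : Integrable (fun z => S z ⬝ᵥ S z) (stdGaussian r))
    (hdetint : Integrable (fun z => Real.log (jac S z).det) (stdGaussian r)) :
    Integrable (fun z =>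
        Real.log ((((stdGaussian r).map S).rnDeriv
          ((stdGaussian r).withDensity fun z' =>
            ENNReal.ofReal (Real.exp (-(Φ z')) / ∫ z'', Real.exp (-(Φ z'')) ∂(stdGaussian r)))
          z).toReal)) ((stdGaussian r).map S) ∧
      KLdiv ((stdGaussian r).map S)
          ((stdGaussian r).withDensity fun z' =>
            ENNReal.ofReal (Real.exp (-(Φ z')) / ∫ z'', Real.exp (-(Φ z'')) ∂(stdGaussian r))) =
        (∫ z, (Φ (S z) + (1 / 2) * (S z ⬝ᵥ S z) - Real.log (jac S z).det)
            ∂(stdGaussian r)) +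
          Real.log (∫ z, Real.exp (-(Φ z)) ∂(stdGaussian r)) - (r : ℝ) / 2 := by
  classical
  set π₀ := stdGaussian r with hπ₀
  set Z : ℝ := ∫ z, Real.exp (-(Φ z)) ∂π₀ with hZdef
  have hZ : 0 < Z := hZpos
  have hScont : Continuous S := hS.continuous
  have hSinvcont : Continuous Sinv := hSinv.continuous
  have hSdiff : Differentiable ℝ S := hS.differentiable one_ne_zero
  have hdet_cont : Continuous fun z => (jac S z).det := by
    have hfd : Continuous fun z => fderiv ℝ S z := hS.continuous_fderiv one_ne_zero
    exact Continuous.matrix_det (continuous_matrix fun i j =>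
      (continuous_apply i).comp (hfd.clm_apply continuous_const))
  have hdet_eq : ∀ z, (fderiv ℝ S z).det = (jac S z).det := by
    intro z
    have hm : LinearMap.toMatrix (Pi.basisFun ℝ (Fin r)) (Pi.basisFun ℝ (Fin r))
        ((fderiv ℝ S z : (Fin r → ℝ) →L[ℝ] (Fin r → ℝ)) :
          (Fin r → ℝ) →ₗ[ℝ] (Fin r → ℝ)) = jac S z := by
      ext i j
      simp [LinearMap.toMatrix_apply, jac]
    rw [show (fderiv ℝ S z).det
        = LinearMap.det ((fderiv ℝ S z : (Fin r → ℝ) →L[ℝ] (Fin r → ℝ)) :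
            (Fin r → ℝ) →ₗ[ℝ] (Fin r → ℝ)) from rfl,
      ← LinearMap.det_toMatrix (Pi.basisFun ℝ (Fin r)), hm]
  have hπ : π₀ = volume.withDensity fun z => ENNReal.ofReal (gdens z) := stdGaussian_eq r
  -- pushforward of the jacobian-determinant density is Lebesgue
  have hmap0 : Measure.map S (volume.withDensity fun z =>
      ENNReal.ofReal ((jac S z).det)) = volume := by
    have h := map_withDensity_abs_det_fderiv_eq_addHaar (μ := volume) MeasurableSet.univ.nullMeasurableSet
      (fun x _ => (hSdiff x).hasFDerivAt.hasFDerivWithinAt) (hli.injective.injOn)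
    simp only [Measure.restrict_univ, Set.image_univ, hri.surjective.range_eq] at h
    have hfun : (fun z => ENNReal.ofReal ((jac S z).det))
        = fun x => ENNReal.ofReal |(fderiv ℝ S x).det| := by
      funext x
      rw [hdet_eq x, abs_of_pos (hdet x)]
    rw [hfun]
    exact h
  -- the density of the pushforward of the standard gaussian
  set h₁ : (Fin r → ℝ) → ℝ≥0∞ :=
    fun y => ENNReal.ofReal (gdens (Sinv y) / (jac S (Sinv y)).det) with hh₁
  have h₁meas : Measurable h₁ :=
    ((continuous_gdens.comp hSinvcont).measurable.div
      (hdet_cont.comp hSinvcont).measurable).ennreal_ofReal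
  have hmapS : Measure.map S π₀ = volume.withDensity h₁ := by
    rw [hπ]
    have hsplit : (fun z => ENNReal.ofReal (gdens z)) =
        (fun z => ENNReal.ofReal ((jac S z).det)) * (fun z => h₁ (S z)) := by
      funext z
      simp only [Pi.mul_apply, hh₁, hli z]
      rw [← ENNReal.ofReal_mul (hdet z).le]
      congr 1
      field_simp
      rw [mul_div_assoc, div_self (hdet z).ne', mul_one]
    rw [hsplit, withDensity_mul volume hdet_cont.measurable.ennreal_ofReal
      (show Measurable fun z => h₁ (S z) from h₁meas.comp hScont.measurable),
      map_withDensity_comp _ hScont.measurable h₁meas, hmap0]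
  -- the density of the target measure
  set h₂ : (Fin r → ℝ) → ℝ≥0∞ :=
    fun y => ENNReal.ofReal (gdens y * (Real.exp (-(Φ y)) / Z)) with hh₂
  have h₂meas : Measurable h₂ :=
    (continuous_gdens.measurable.mul ((hΦ.neg.exp).div_const Z)).ennreal_ofReal
  have h₂pos : ∀ y, 0 < gdens y * (Real.exp (-(Φ y)) / Z) :=
    fun y => mul_pos (gdens_pos y) (div_pos (Real.exp_pos _) hZ)
  have hρ : (π₀.withDensity fun z' => ENNReal.ofReal (Real.exp (-(Φ z')) / Z))
      = volume.withDensity h₂ := by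
    rw [hπ, ← withDensity_mul volume continuous_gdens.measurable.ennreal_ofReal
      (show Measurable fun z => ENNReal.ofReal (Real.exp (-(Φ z)) / Z) from
        ((hΦ.neg.exp).div_const Z).ennreal_ofReal)]
    congr 1
    funext z
    simp only [Pi.mul_apply, hh₂]
    rw [← ENNReal.ofReal_mul (gdens_pos z).le]
  haveI hsf2 : SigmaFinite (volume.withDensity h₂) :=
    SigmaFinite.withDensity_of_ne_top
      (Filter.Eventually.of_forall fun y => ENNReal.ofReal_ne_top)
  haveI : IsProbabilityMeasure (Measure.map S π₀) :=
    Measure.isProbabilityMeasure_map hScont.measurable.aemeasurable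
  have hacν₂vol : volume.withDensity h₂ ≪ volume := withDensity_absolutelyContinuous _ _
  have hacvolν₂ : (volume : Measure (Fin r → ℝ)) ≪ volume.withDensity h₂ :=
    withDensity_absolutelyContinuous' h₂meas.aemeasurable
      (Filter.Eventually.of_forall fun y => (ENNReal.ofReal_pos.mpr (h₂pos y)).ne')
  have A : (volume.withDensity h₁).rnDeriv (volume.withDensity h₂)
      =ᵐ[volume.withDensity h₂] fun x => h₁ x * volume.rnDeriv (volume.withDensity h₂) x :=
    Measure.rnDeriv_withDensity_left h₁meas.aemeasurable
      (Filter.Eventually.of_forall fun y => ENNReal.ofReal_ne_top)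
  have B : volume.rnDeriv (volume.withDensity h₂)
      =ᵐ[(volume : Measure (Fin r → ℝ))] fun x => (h₂ x)⁻¹ * volume.rnDeriv volume x :=
    Measure.rnDeriv_withDensity_right volume volume h₂meas.aemeasurable
      (Filter.Eventually.of_forall fun y => (ENNReal.ofReal_pos.mpr (h₂pos y)).ne')
      (Filter.Eventually.of_forall fun y => ENNReal.ofReal_ne_top)
  have C : volume.rnDeriv (volume : Measure (Fin r → ℝ)) =ᵐ[volume] fun _ => 1 :=
    Measure.rnDeriv_self _
  have D : (Measure.map S π₀).rnDeriv (volume.withDensity h₂)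
      =ᵐ[volume.withDensity h₂] fun x => h₁ x * (h₂ x)⁻¹ := by
    rw [hmapS]
    filter_upwards [A, B.filter_mono hacν₂vol.ae_le, C.filter_mono hacν₂vol.ae_le]
      with x hA hB hC
    rw [hA, hB, hC, mul_one]
  have hν₁ν₂ : Measure.map S π₀ ≪ volume.withDensity h₂ := by
    rw [hmapS]
    exact (withDensity_absolutelyContinuous _ _).trans hacvolν₂
  have E : (Measure.map S π₀).rnDeriv (volume.withDensity h₂)
      =ᵐ[Measure.map S π₀] fun x => h₁ x * (h₂ x)⁻¹ := D.filter_mono hν₁ν₂.ae_le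
  have me : MeasurableEmbedding S :=
    (Homeomorph.mk ⟨S, Sinv, hli, hri⟩ hScont hSinvcont).measurableEmbedding
  have hfinal : (fun z => Real.log
        (((Measure.map S π₀).rnDeriv (volume.withDensity h₂) (S z)).toReal)) =ᵐ[π₀]
      fun z => Φ (S z) + (1 / 2) * (S z ⬝ᵥ S z) - Real.log (jac S z).det
        - (1 / 2) * (z ⬝ᵥ z) + Real.log Z := by
    have hE' : ∀ᵐ z ∂π₀, (Measure.map S π₀).rnDeriv (volume.withDensity h₂) (S z)
        = h₁ (S z) * (h₂ (S z))⁻¹ := me.ae_map_iff.mp E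
    filter_upwards [hE'] with z hz
    rw [hz]
    simp only [hh₁, hh₂, hli z]
    rw [ENNReal.toReal_mul, ENNReal.toReal_inv,
      ENNReal.toReal_ofReal (div_nonneg (gdens_pos z).le (hdet z).le),
      ENNReal.toReal_ofReal (h₂pos (S z)).le, ← div_eq_mul_inv,
      Real.log_div (div_pos (gdens_pos z) (hdet z)).ne' (h₂pos (S z)).ne',
      Real.log_div (gdens_pos z).ne' (hdet z).ne',
      Real.log_mul (gdens_pos (S z)).ne' (div_pos (Real.exp_pos _) hZ).ne',
      Real.log_div (Real.exp_pos _).ne' hZ.ne', Real.log_exp]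
    have lg : ∀ w : Fin r → ℝ, Real.log (gdens w)
        = Real.log (((2 * π) ^ r : ℝ) ^ (-(1:ℝ)/2)) + (-(1/2) * (w ⬝ᵥ w)) := by
      intro w
      unfold gdens
      rw [Real.log_mul (by positivity) (Real.exp_pos _).ne', Real.log_exp]
    rw [lg z, lg (S z)]
    ring
  have hI : Integrable (fun z => Φ (S z) + (1 / 2) * (S z ⬝ᵥ S z)
      - Real.log (jac S z).det) π₀ := (hΦint.add (hSint.const_mul _)).sub hdetint
  have hdot' : Integrable (fun z => (1 / 2) * (z ⬝ᵥ z)) π₀ :=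
    integrable_dot_stdGaussian.const_mul _
  have hTi : Integrable (fun z => Φ (S z) + (1 / 2) * (S z ⬝ᵥ S z)
      - Real.log (jac S z).det - (1 / 2) * (z ⬝ᵥ z) + Real.log Z) π₀ :=
    (hI.sub hdot').add (integrable_const _)
  constructor
  · rw [hρ, me.integrable_map_iff]
    exact hTi.congr hfinal.symm
  · have hI2 : Integrable (fun z => Φ (S z) + (1 / 2) * (S z ⬝ᵥ S z)
        - Real.log (jac S z).det - (1 / 2) * (z ⬝ᵥ z)) π₀ := hI.sub hdot'
    rw [KLdiv, hρ, me.integral_map, integral_congr_ae hfinal,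
      integral_add hI2 (integrable_const _), integral_sub hI hdot',
      integral_const, integral_const_mul, integral_dot_stdGaussian]
    simp only [measure_univ, probReal_univ, ENNReal.toReal_one, smul_eq_mul, one_mul]
    ring
end
end

section
/- Let π = N(0, I_r) on ℝʳ and let γ̂ be a probability measure on ℝ^d (the law of the whitened data). Let g_opt, g : ℝʳ → ℝ^d be continuously differentiable with ∫ [‖g_opt(z)‖² + ‖∇g_opt(z)‖_F²] dπ(z) < ∞ and ∫ [‖g(z)‖² + ‖∇g(z)‖_F²] dπ(z) < ∞. Let S : ℝʳ → ℝʳ be Borel measurable such that S#π is absolutely continuous with respect to π with d(S#π)/dπ ≤ C₁ π-a.e. for some constant C₁ ≥ 0, and let J : ℝʳ → ℝ^{r×p} be Borel measurable. Assume C₂ := ∫ ‖∇g(S(z)) J(z)‖_F² dπ(z) < ∞ and C₃ := ∫∫ ‖J(z)‖_F² ‖g_opt(S(z)) − w‖² dπ(z) dγ̂(w) < ∞. Then ∫∫ ‖ J(z)ᵀ [ ∇g_opt(S(z))ᵀ (g_opt(S(z)) − w) − ∇g(S(z))ᵀ (g(S(z)) − w) ] ‖ dπ(z) dγ̂(w)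 ≤ (√C₂ + √C₃) · √C₁ · ( ∫ [ ‖g_opt(z) − g(z)‖² + ‖∇g_opt(z) − ∇g(z)‖_F² ] dπ(z) )^{1/2}. -/
open MeasureTheory Matrix Real

noncomputable section

/-- Euclidean norm on `ℝᵏ`. -/
def eucNorm {k : ℕ} (v : Fin k → ℝ) : ℝ := Real.sqrt (v ⬝ᵥ v)

/-- Squared Frobenius norm of a matrix. -/
def frobSq {a b : ℕ} (A : Matrix (Fin a) (Fin b) ℝ) : ℝ := ∑ i, ∑ j, (A i j) ^ 2

namespace RKLAux

lemma dot_self_eq {k : ℕ} (v : Fin k → ℝ) : v ⬝ᵥ v = ∑ i, v i ^ 2 := by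
  simp [dotProduct, sq]

lemma dot_self_nonneg {k : ℕ} (v : Fin k → ℝ) : 0 ≤ v ⬝ᵥ v := by
  rw [dot_self_eq]; positivity

lemma frobSq_nonneg {a b : ℕ} (A : Matrix (Fin a) (Fin b) ℝ) : 0 ≤ frobSq A := by
  unfold frobSq; positivity

lemma eucNorm_nonneg {k : ℕ} (v : Fin k → ℝ) : 0 ≤ eucNorm v := Real.sqrt_nonneg _

lemma eucNorm_eq_norm {k : ℕ} (v : Fin k → ℝ) :
    eucNorm v = ‖(WithLp.equiv 2 (Fin k → ℝ)).symm v‖ := by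
  rw [EuclideanSpace.norm_eq, eucNorm, dot_self_eq]
  congr 1
  refine Finset.sum_congr rfl fun i _ => ?_
  rw [Real.norm_eq_abs, sq_abs]
  rfl

lemma eucNorm_add_le {k : ℕ} (x y : Fin k → ℝ) :
    eucNorm (x + y) ≤ eucNorm x + eucNorm y := by
  rw [eucNorm_eq_norm, eucNorm_eq_norm, eucNorm_eq_norm]
  exact norm_add_le _ _

lemma eucNorm_transpose_mulVec_le {a b : ℕ} (M : Matrix (Fin a) (Fin b) ℝ) (v : Fin a → ℝ) :
    eucNorm (Mᵀ *ᵥ v) ≤ Real.sqrt (frobSq M) * eucNorm v := by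
  rw [eucNorm, eucNorm, ← Real.sqrt_mul (frobSq_nonneg M)]
  apply Real.sqrt_le_sqrt
  rw [dot_self_eq, dot_self_eq]
  have step1 : ∑ j, (Mᵀ *ᵥ v) j ^ 2 ≤ ∑ j, (∑ i, (M i j) ^ 2) * (∑ i, v i ^ 2) := by
    refine Finset.sum_le_sum fun j _ => ?_
    have h1 : (Mᵀ *ᵥ v) j = ∑ i, M i j * v i := by
      simp [Matrix.mulVec, dotProduct, Matrix.transpose_apply]
    rw [h1]
    exact Finset.sum_mul_sq_le_sq_mul_sq _ _ _
  refine step1.trans (le_of_eq ?_)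
  rw [← Finset.sum_mul]; congr 1; rw [frobSq, Finset.sum_comm]

lemma pointwise_bound {r d p : ℕ} (J : Matrix (Fin r) (Fin p) ℝ)
    (A B : Matrix (Fin d) (Fin r) ℝ) (u v : Fin d → ℝ) :
    eucNorm (Jᵀ *ᵥ (Aᵀ *ᵥ u - Bᵀ *ᵥ v)) ≤
      Real.sqrt (frobSq (B * J)) * eucNorm (u - v) +
      Real.sqrt (frobSq J * (u ⬝ᵥ u)) * Real.sqrt (frobSq (A - B)) := by
  have hdecomp : Aᵀ *ᵥ u - Bᵀ *ᵥ v = (A - B)ᵀ *ᵥ u + Bᵀ *ᵥ (u - v) := by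
    rw [Matrix.transpose_sub, Matrix.sub_mulVec, Matrix.mulVec_sub]
    abel
  rw [hdecomp, Matrix.mulVec_add]
  refine (eucNorm_add_le _ _).trans ?_
  rw [add_comm]
  have hA : eucNorm (Jᵀ *ᵥ (Bᵀ *ᵥ (u - v))) ≤ Real.sqrt (frobSq (B * J)) * eucNorm (u - v) := by
    have h : Jᵀ *ᵥ (Bᵀ *ᵥ (u - v)) = (B * J)ᵀ *ᵥ (u - v) := by
      rw [Matrix.transpose_mul, Matrix.mulVec_mulVec]
    rw [h]
    exact eucNorm_transpose_mulVec_le _ _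
  have hB : eucNorm (Jᵀ *ᵥ ((A - B)ᵀ *ᵥ u)) ≤
      Real.sqrt (frobSq J * (u ⬝ᵥ u)) * Real.sqrt (frobSq (A - B)) := by
    refine (eucNorm_transpose_mulVec_le _ _).trans ?_
    have h2 : eucNorm ((A - B)ᵀ *ᵥ u) ≤ Real.sqrt (frobSq (A - B)) * eucNorm u :=
      eucNorm_transpose_mulVec_le _ _
    have h3 : Real.sqrt (frobSq J) * eucNorm ((A - B)ᵀ *ᵥ u) ≤
        Real.sqrt (frobSq J) * (Real.sqrt (frobSq (A - B)) * eucNorm u) :=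
      mul_le_mul_of_nonneg_left h2 (Real.sqrt_nonneg _)
    refine h3.trans (le_of_eq ?_)
    rw [Real.sqrt_mul (frobSq_nonneg J), eucNorm]; ring
  exact add_le_add hA hB

lemma sub_dot_le {k : ℕ} (x y : Fin k → ℝ) :
    (x - y) ⬝ᵥ (x - y) ≤ 2 * (x ⬝ᵥ x) + 2 * (y ⬝ᵥ y) := by
  rw [dot_self_eq, dot_self_eq, dot_self_eq]
  calc ∑ i, (x - y) i ^ 2 ≤ ∑ i, (2 * x i ^ 2 + 2 * y i ^ 2) := by
        refine Finset.sum_le_sum fun i _ => ?_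
        have : (x - y) i = x i - y i := rfl
        rw [this]; nlinarith [sq_nonneg (x i + y i)]
    _ = 2 * ∑ i, x i ^ 2 + 2 * ∑ i, y i ^ 2 := by
        rw [Finset.sum_add_distrib, Finset.mul_sum, Finset.mul_sum]

lemma frobSq_sub_le {a b : ℕ} (A B : Matrix (Fin a) (Fin b) ℝ) :
    frobSq (A - B) ≤ 2 * frobSq A + 2 * frobSq B := by
  unfold frobSq
  calc ∑ i, ∑ j, ((A - B) i j) ^ 2
      ≤ ∑ i, ∑ j, (2 * (A i j)^2 + 2 * (B i j)^2) := by
        refine Finset.sum_le_sum fun i _ => Finset.sum_le_sum fun j _ => ?_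
        have : (A - B) i j = A i j - B i j := rfl
        rw [this]; nlinarith [sq_nonneg (A i j + B i j)]
    _ = 2 * (∑ i, ∑ j, (A i j)^2) + 2 * ∑ i, ∑ j, (B i j)^2 := by
        simp only [Finset.sum_add_distrib, Finset.mul_sum]

lemma measurable_mulVec {α : Type*} [MeasurableSpace α] {a b : ℕ}
    {M : α → Matrix (Fin a) (Fin b) ℝ} {v : α → Fin b → ℝ}
    (hM : ∀ i j, Measurable fun x => M x i j) (hv : ∀ j, Measurable fun x => v x j)
    (i : Fin a) : Measurable fun x => (M x *ᵥ v x) i := by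
  simp only [Matrix.mulVec, dotProduct]
  exact Finset.measurable_sum _ fun j _ => (hM i j).mul (hv j)

lemma measurable_dot {α : Type*} [MeasurableSpace α] {k : ℕ}
    {u v : α → Fin k → ℝ} (hu : ∀ i, Measurable fun x => u x i)
    (hv : ∀ i, Measurable fun x => v x i) :
    Measurable fun x => (u x) ⬝ᵥ (v x) := by
  simp only [dotProduct]
  exact Finset.measurable_sum _ fun i _ => (hu i).mul (hv i)

lemma measurable_eucNorm {α : Type*} [MeasurableSpace α] {k : ℕ}
    {v : α → Fin k → ℝ} (hv : ∀ i, Measurable fun x => v x i) :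
    Measurable fun x => eucNorm (v x) :=
  (measurable_dot hv hv).sqrt

lemma measurable_frobSq {α : Type*} [MeasurableSpace α] {a b : ℕ}
    {A : α → Matrix (Fin a) (Fin b) ℝ} (h : ∀ i j, Measurable fun x => A x i j) :
    Measurable fun x => frobSq (A x) := by
  unfold frobSq
  exact Finset.measurable_sum _ fun i _ => Finset.measurable_sum _ fun j _ =>
    (h i j).pow measurable_const

lemma continuous_jac_entry {n d : ℕ} {f : (Fin n → ℝ) → (Fin d → ℝ)}
    (hf : ContDiff ℝ 1 f) (i : Fin d) (j : Fin n) :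
    Continuous fun z => jac f z i j := by
  have h1 : Continuous (fderiv ℝ f) := hf.continuous_fderiv one_ne_zero
  have h2 : Continuous fun z => (fderiv ℝ f z) (Pi.single j 1) :=
    ((ContinuousLinearMap.apply ℝ (Fin d → ℝ) (Pi.single j 1)).continuous).comp h1
  exact (continuous_apply i).comp h2

end RKLAux

open RKLAux

/-- Theorem 3.2: surrogate approximation of the rKL objective
gradient, with explicit constants. -/
theorem rKL_gradient_error_bound
    {r d p : ℕ} (γhat : Measure (Fin d → ℝ)) [IsProbabilityMeasure γhat]
    (gopt g : (Fin r → ℝ) → (Fin d → ℝ))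
    (hgopt : ContDiff ℝ 1 gopt) (hg : ContDiff ℝ 1 g)
    (hgoptInt : Integrable (fun z => gopt z ⬝ᵥ gopt z + frobSq (jac gopt z)) (stdGaussian r))
    (hgInt : Integrable (fun z => g z ⬝ᵥ g z + frobSq (jac g z)) (stdGaussian r))
    (S : (Fin r → ℝ) → (Fin r → ℝ)) (hS : Measurable S)
    (C₁ : ℝ) (hC₁ : 0 ≤ C₁)
    (hac : (stdGaussian r).map S ≪ stdGaussian r)
    (hbound : ∀ᵐ z ∂(stdGaussian r),
      ((stdGaussian r).map S).rnDeriv (stdGaussian r) z ≤ ENNReal.ofReal C₁)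
    (J : (Fin r → ℝ) → Matrix (Fin r) (Fin p) ℝ)
    (hJ : ∀ i j, Measurable fun z => J z i j)
    (hC₂ : Integrable (fun z => frobSq ((jac g (S z)) * J z)) (stdGaussian r))
    (hC₃ : Integrable (fun q : (Fin d → ℝ) × (Fin r → ℝ) =>
        frobSq (J q.2) * ((gopt (S q.2) - q.1) ⬝ᵥ (gopt (S q.2) - q.1)))
      (γhat.prod (stdGaussian r))) :
    (∫ w, ∫ z,
        eucNorm ((J z)ᵀ *ᵥ
          ((jac gopt (S z))ᵀ *ᵥ (gopt (S z) - w) - (jac g (S z))ᵀ *ᵥ (g (S z) - w)))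
        ∂(stdGaussian r) ∂γhat) ≤
      (Real.sqrt (∫ z, frobSq ((jac g (S z)) * J z) ∂(stdGaussian r)) +
          Real.sqrt (∫ w, ∫ z,
            frobSq (J z) * ((gopt (S z) - w) ⬝ᵥ (gopt (S z) - w))
            ∂(stdGaussian r) ∂γhat)) *
        Real.sqrt C₁ *
        Real.sqrt (∫ z, ((gopt z - g z) ⬝ᵥ (gopt z - g z) +
          frobSq (jac gopt z - jac g z)) ∂(stdGaussian r)) := by
  classical
  set pm := stdGaussian r with hpm
  haveI hsf : SigmaFinite pm := by
    rw [hpm]; unfold stdGaussian gaussianOf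
    exact SigmaFinite.withDensity_of_ne_top (ae_of_all _ fun x => ENNReal.ofReal_ne_top)
  -- continuity facts
  have hgoptC : Continuous gopt := hgopt.continuous
  have hgC : Continuous g := hg.continuous
  have hjacoptC : ∀ i j, Continuous fun z => jac gopt z i j := continuous_jac_entry hgopt
  have hjacgC : ∀ i j, Continuous fun z => jac g z i j := continuous_jac_entry hg
  -- building blocks
  set hfun : (Fin r → ℝ) → ℝ := fun z => (gopt z - g z) ⬝ᵥ (gopt z - g z) with hhfun
  set h2fun : (Fin r → ℝ) → ℝ := fun z => frobSq (jac gopt z - jac g z) with hh2fun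
  set aF : (Fin r → ℝ) → ℝ := fun z => Real.sqrt (frobSq (jac g (S z) * J z)) with haF
  set cF : (Fin d → ℝ) × (Fin r → ℝ) → ℝ := fun q =>
    Real.sqrt (frobSq (J q.2) * ((gopt (S q.2) - q.1) ⬝ᵥ (gopt (S q.2) - q.1))) with hcF
  set Φ : (Fin d → ℝ) × (Fin r → ℝ) → ℝ := fun q =>
    eucNorm ((J q.2)ᵀ *ᵥ
      ((jac gopt (S q.2))ᵀ *ᵥ (gopt (S q.2) - q.1) - (jac g (S q.2))ᵀ *ᵥ (g (S q.2) - q.1)))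
    with hΦdef
  -- measurability in z
  have mgoptS : ∀ i, Measurable fun z => gopt (S z) i := fun i =>
    (((continuous_apply i).comp hgoptC).measurable).comp hS
  have mgS : ∀ i, Measurable fun z => g (S z) i := fun i =>
    (((continuous_apply i).comp hgC).measurable).comp hS
  have mJgS : ∀ i j, Measurable fun z => (jac g (S z) * J z) i j := by
    intro i j
    simp only [Matrix.mul_apply]
    exact Finset.measurable_sum _ fun k _ =>
      (((hjacgC i k).measurable).comp hS).mul (hJ k j)
  have maF : Measurable aF := (measurable_frobSq mJgS).sqrt
  have mhfun : Measurable hfun := by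
    refine measurable_dot (fun i => ?_) (fun i => ?_) <;>
      exact (((continuous_apply i).comp hgoptC).measurable).sub
        (((continuous_apply i).comp hgC).measurable)
  have mh2fun : Measurable h2fun := by
    refine measurable_frobSq fun i j => ?_
    exact ((hjacoptC i j).measurable).sub ((hjacgC i j).measurable)
  -- measurability on the product
  have mΦ : Measurable Φ := by
    refine measurable_eucNorm fun i => ?_
    refine measurable_mulVec (fun i j => ?_) (fun j => ?_) i
    · exact (hJ j i).comp measurable_snd
    · refine Measurable.sub ?_ ?_
      · refine measurable_mulVec (fun i' j' => ?_) (fun j' => ?_) j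
        · exact (((hjacoptC j' i').measurable).comp (hS.comp measurable_snd))
        · exact ((((continuous_apply j').comp hgoptC).measurable).comp
            (hS.comp measurable_snd)).sub ((measurable_pi_apply j').comp measurable_fst)
      · refine measurable_mulVec (fun i' j' => ?_) (fun j' => ?_) j
        · exact (((hjacgC j' i').measurable).comp (hS.comp measurable_snd))
        · exact ((((continuous_apply j').comp hgC).measurable).comp
            (hS.comp measurable_snd)).sub ((measurable_pi_apply j').comp measurable_fst)
  have mcF : Measurable cF := by
    refine Measurable.sqrt (Measurable.mul ?_ ?_)
    · exact measurable_frobSq fun i j => (hJ i j).comp measurable_snd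
    · refine measurable_dot (fun i => ?_) (fun i => ?_) <;>
        exact ((((continuous_apply i).comp hgoptC).measurable).comp
          (hS.comp measurable_snd)).sub ((measurable_pi_apply i).comp measurable_fst)
  -- pointwise bound
  have hptw : ∀ q : (Fin d → ℝ) × (Fin r → ℝ),
      Φ q ≤ aF q.2 * Real.sqrt (hfun (S q.2)) + cF q * Real.sqrt (h2fun (S q.2)) := by
    intro q
    have hb := pointwise_bound (J q.2) (jac gopt (S q.2)) (jac g (S q.2))
      (gopt (S q.2) - q.1) (g (S q.2) - q.1)
    have hsub : (gopt (S q.2) - q.1) - (g (S q.2) - q.1) = gopt (S q.2) - g (S q.2) :=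
      sub_sub_sub_cancel_right _ _ _
    rw [hsub] at hb
    exact hb
  -- integrability of hfun + h2fun
  have hHnn : ∀ z, 0 ≤ hfun z + h2fun z := fun z =>
    add_nonneg (dot_self_nonneg _) (frobSq_nonneg _)
  have hHint : Integrable (fun z => hfun z + h2fun z) pm := by
    refine Integrable.mono' (((hgoptInt.add hgInt).const_mul 2)) ?_ (ae_of_all _ fun z => ?_)
    · exact (mhfun.add mh2fun).aestronglyMeasurable
    · rw [Real.norm_eq_abs, abs_of_nonneg (hHnn z)]
      have h1 := sub_dot_le (gopt z) (g z)
      have h2 := frobSq_sub_le (jac gopt z) (jac g z)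
      simp only [hhfun, hh2fun, Pi.add_apply]
      nlinarith [h1, h2]
  set E : ℝ := ∫ z, (hfun z + h2fun z) ∂pm with hEdef
  have hE0 : 0 ≤ E := integral_nonneg hHnn
  have hEofReal : ∫⁻ z, ENNReal.ofReal (hfun z + h2fun z) ∂pm = ENNReal.ofReal E :=
    (ofReal_integral_eq_lintegral_ofReal hHint (ae_of_all _ hHnn)).symm
  have hE1 : ∫⁻ z, ENNReal.ofReal (hfun z) ∂pm ≤ ENNReal.ofReal E := by
    rw [← hEofReal]
    exact lintegral_mono fun z =>
      ENNReal.ofReal_le_ofReal (le_add_of_nonneg_right (frobSq_nonneg _))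
  have hE2 : ∫⁻ z, ENNReal.ofReal (h2fun z) ∂pm ≤ ENNReal.ofReal E := by
    rw [← hEofReal]
    exact lintegral_mono fun z =>
      ENNReal.ofReal_le_ofReal (le_add_of_nonneg_left (dot_self_nonneg _))
  -- pushforward bound
  have hpush : ∀ f : (Fin r → ℝ) → ENNReal, Measurable f →
      ∫⁻ z, f (S z) ∂pm ≤ ENNReal.ofReal C₁ * ∫⁻ z, f z ∂pm := by
    intro f hf
    have h1 : ∫⁻ z, f (S z) ∂pm = ∫⁻ z, f z ∂(pm.map S) := (lintegral_map hf hS).symm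
    have h2 : ∫⁻ z, f z ∂(pm.map S) = ∫⁻ z, (pm.map S).rnDeriv pm z * f z ∂pm :=
      (lintegral_rnDeriv_mul hac hf.aemeasurable).symm
    rw [h1, h2, ← lintegral_const_mul _ hf]
    refine lintegral_mono_ae ?_
    filter_upwards [hbound] with z hz
    exact mul_le_mul_left hz _
  -- marginal identity
  have hsnd : ∀ f : (Fin r → ℝ) → ENNReal, Measurable f →
      ∫⁻ q, f q.2 ∂(γhat.prod pm) = ∫⁻ z, f z ∂pm := by
    intro f hf
    rw [← lintegral_map hf measurable_snd, Measure.map_snd_prod, measure_univ, one_smul]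
  -- rpow facts
  have h22 : Real.HolderConjugate 2 2 := by constructor <;> norm_num
  have hrpow_half : ∀ x : ℝ, 0 ≤ x →
      (ENNReal.ofReal x) ^ (1/2 : ℝ) = ENNReal.ofReal (Real.sqrt x) := by
    intro x hx
    rw [ENNReal.ofReal_rpow_of_nonneg hx (by norm_num), Real.sqrt_eq_rpow]
  have hsq : ∀ x : ℝ, 0 ≤ x →
      (ENNReal.ofReal (Real.sqrt x)) ^ (2 : ℝ) = ENNReal.ofReal x := by
    intro x hx
    rw [ENNReal.ofReal_rpow_of_nonneg (Real.sqrt_nonneg x) (by norm_num)]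
    congr 1
    rw [show (2:ℝ) = ((2:ℕ):ℝ) by norm_num, Real.rpow_natCast, Real.sq_sqrt hx]
  -- the constants
  set C₂v : ℝ := ∫ z, frobSq ((jac g (S z)) * J z) ∂pm with hC₂v
  set C₃v : ℝ := ∫ q, frobSq (J q.2) * ((gopt (S q.2) - q.1) ⬝ᵥ (gopt (S q.2) - q.1))
      ∂(γhat.prod pm) with hC₃v
  have hC₂v0 : 0 ≤ C₂v := integral_nonneg fun z => frobSq_nonneg _
  have hC₃v0 : 0 ≤ C₃v :=
    integral_nonneg fun q => mul_nonneg (frobSq_nonneg _) (dot_self_nonneg _)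
  -- second Hölder factors
  have hfac2a : ∫⁻ z, (ENNReal.ofReal (Real.sqrt (hfun (S z)))) ^ (2:ℝ) ∂pm ≤
      ENNReal.ofReal C₁ * ENNReal.ofReal E := by
    have : ∀ z, (ENNReal.ofReal (Real.sqrt (hfun (S z)))) ^ (2:ℝ) =
        ENNReal.ofReal (hfun (S z)) := fun z => hsq _ (dot_self_nonneg _)
    simp only [this]
    refine (hpush _ (ENNReal.measurable_ofReal.comp mhfun)).trans ?_
    exact mul_le_mul_right hE1 _
  have hfac2b : ∫⁻ z, (ENNReal.ofReal (Real.sqrt (h2fun (S z)))) ^ (2:ℝ) ∂pm ≤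
      ENNReal.ofReal C₁ * ENNReal.ofReal E := by
    have : ∀ z, (ENNReal.ofReal (Real.sqrt (h2fun (S z)))) ^ (2:ℝ) =
        ENNReal.ofReal (h2fun (S z)) := fun z => hsq _ (frobSq_nonneg _)
    simp only [this]
    refine (hpush _ (ENNReal.measurable_ofReal.comp mh2fun)).trans ?_
    exact mul_le_mul_right hE2 _
  have hCE : (ENNReal.ofReal C₁ * ENNReal.ofReal E) ^ (1/2 : ℝ) =
      ENNReal.ofReal (Real.sqrt C₁ * Real.sqrt E) := by
    rw [← ENNReal.ofReal_mul hC₁, hrpow_half _ (mul_nonneg hC₁ hE0), Real.sqrt_mul hC₁]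
  -- Term 1
  have hT1 : ∫⁻ z, ENNReal.ofReal (aF z * Real.sqrt (hfun (S z))) ∂pm ≤
      ENNReal.ofReal (Real.sqrt C₂v) * ENNReal.ofReal (Real.sqrt C₁ * Real.sqrt E) := by
    have heq : ∀ z, ENNReal.ofReal (aF z * Real.sqrt (hfun (S z))) =
        (fun z => ENNReal.ofReal (aF z)) z * (fun z => ENNReal.ofReal (Real.sqrt (hfun (S z)))) z :=
      fun z => ENNReal.ofReal_mul (Real.sqrt_nonneg _)
    simp only [heq]
    refine (ENNReal.lintegral_mul_le_Lp_mul_Lq pm h22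
      maF.ennreal_ofReal.aemeasurable
      ((mhfun.comp hS).sqrt).ennreal_ofReal.aemeasurable).trans ?_
    have hfa : ∫⁻ z, (ENNReal.ofReal (aF z)) ^ (2:ℝ) ∂pm = ENNReal.ofReal C₂v := by
      have : ∀ z, (ENNReal.ofReal (aF z)) ^ (2:ℝ) =
          ENNReal.ofReal (frobSq ((jac g (S z)) * J z)) := fun z => hsq _ (frobSq_nonneg _)
      simp only [this]
      exact (ofReal_integral_eq_lintegral_ofReal hC₂
        (ae_of_all _ fun z => frobSq_nonneg _)).symm
    rw [hfa, hrpow_half _ hC₂v0]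
    refine mul_le_mul_right ?_ _
    calc (∫⁻ z, (ENNReal.ofReal (Real.sqrt (hfun (S z)))) ^ (2:ℝ) ∂pm) ^ (1/2 : ℝ)
        ≤ (ENNReal.ofReal C₁ * ENNReal.ofReal E) ^ (1/2 : ℝ) :=
          ENNReal.rpow_le_rpow hfac2a (by norm_num)
      _ = ENNReal.ofReal (Real.sqrt C₁ * Real.sqrt E) := hCE
  -- Term 2
  have hT2 : ∫⁻ q, ENNReal.ofReal (cF q * Real.sqrt (h2fun (S q.2))) ∂(γhat.prod pm) ≤
      ENNReal.ofReal (Real.sqrt C₃v) * ENNReal.ofReal (Real.sqrt C₁ * Real.sqrt E) := by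
    have heq : ∀ q, ENNReal.ofReal (cF q * Real.sqrt (h2fun (S q.2))) =
        (fun q => ENNReal.ofReal (cF q)) q *
        (fun q : (Fin d → ℝ) × (Fin r → ℝ) =>
          ENNReal.ofReal (Real.sqrt (h2fun (S q.2)))) q :=
      fun q => ENNReal.ofReal_mul (Real.sqrt_nonneg _)
    simp only [heq]
    refine (ENNReal.lintegral_mul_le_Lp_mul_Lq (γhat.prod pm) h22
      mcF.ennreal_ofReal.aemeasurable
      (((mh2fun.comp hS).sqrt).comp measurable_snd).ennreal_ofReal.aemeasurable).trans ?_
    have hfa : ∫⁻ q, (ENNReal.ofReal (cF q)) ^ (2:ℝ) ∂(γhat.prod pm) = ENNReal.ofReal C₃v := by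
      have : ∀ q, (ENNReal.ofReal (cF q)) ^ (2:ℝ) =
          ENNReal.ofReal (frobSq (J q.2) * ((gopt (S q.2) - q.1) ⬝ᵥ (gopt (S q.2) - q.1))) :=
        fun q => hsq _ (mul_nonneg (frobSq_nonneg _) (dot_self_nonneg _))
      simp only [this]
      exact (ofReal_integral_eq_lintegral_ofReal hC₃
        (ae_of_all _ fun q => mul_nonneg (frobSq_nonneg _) (dot_self_nonneg _))).symm
    rw [hfa, hrpow_half _ hC₃v0]
    refine mul_le_mul_right ?_ _
    have hmarg : ∫⁻ q, (ENNReal.ofReal (Real.sqrt (h2fun (S q.2)))) ^ (2:ℝ) ∂(γhat.prod pm) =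
        ∫⁻ z, (ENNReal.ofReal (Real.sqrt (h2fun (S z)))) ^ (2:ℝ) ∂pm := by
      exact hsnd _ ((((mh2fun.comp hS).sqrt).ennreal_ofReal).pow measurable_const)
    calc (∫⁻ q, (ENNReal.ofReal (Real.sqrt (h2fun (S q.2)))) ^ (2:ℝ) ∂(γhat.prod pm)) ^ (1/2:ℝ)
        = (∫⁻ z, (ENNReal.ofReal (Real.sqrt (h2fun (S z)))) ^ (2:ℝ) ∂pm) ^ (1/2:ℝ) := by
          rw [hmarg]
      _ ≤ (ENNReal.ofReal C₁ * ENNReal.ofReal E) ^ (1/2 : ℝ) :=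
          ENNReal.rpow_le_rpow hfac2b (by norm_num)
      _ = ENNReal.ofReal (Real.sqrt C₁ * Real.sqrt E) := hCE
  -- main lintegral bound
  have hL : ∫⁻ q, ENNReal.ofReal (Φ q) ∂(γhat.prod pm) ≤
      ENNReal.ofReal ((Real.sqrt C₂v + Real.sqrt C₃v) * (Real.sqrt C₁ * Real.sqrt E)) := by
    have hsplit : ∫⁻ q, ENNReal.ofReal (Φ q) ∂(γhat.prod pm) ≤
        (∫⁻ q, ENNReal.ofReal (aF q.2 * Real.sqrt (hfun (S q.2))) ∂(γhat.prod pm)) +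
        (∫⁻ q, ENNReal.ofReal (cF q * Real.sqrt (h2fun (S q.2))) ∂(γhat.prod pm)) := by
      have m1 : Measurable fun q : (Fin d → ℝ) × (Fin r → ℝ) =>
          ENNReal.ofReal (aF q.2 * Real.sqrt (hfun (S q.2))) :=
        ((maF.comp measurable_snd).mul
          (((mhfun.comp hS).sqrt).comp measurable_snd)).ennreal_ofReal
      rw [← lintegral_add_left m1]
      refine lintegral_mono fun q => ?_
      refine le_trans (ENNReal.ofReal_le_ofReal (hptw q)) (ENNReal.ofReal_add_le)
    refine hsplit.trans ?_
    have h1 : ∫⁻ q, ENNReal.ofReal (aF q.2 * Real.sqrt (hfun (S q.2))) ∂(γhat.prod pm) =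
        ∫⁻ z, ENNReal.ofReal (aF z * Real.sqrt (hfun (S z))) ∂pm :=
      hsnd _ ((maF.mul ((mhfun.comp hS).sqrt)).ennreal_ofReal)
    rw [h1]
    refine (add_le_add hT1 hT2).trans (le_of_eq ?_)
    rw [← add_mul, ← ENNReal.ofReal_add (Real.sqrt_nonneg _) (Real.sqrt_nonneg _),
      ← ENNReal.ofReal_mul (add_nonneg (Real.sqrt_nonneg _) (Real.sqrt_nonneg _))]
  -- convert to the Bochner statement
  have hΦnn : ∀ q : (Fin d → ℝ) × (Fin r → ℝ), 0 ≤ Φ q := fun q => eucNorm_nonneg _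
  have hinner : ∀ w, (∫ z, Φ (w, z) ∂pm) = (∫⁻ z, ENNReal.ofReal (Φ (w, z)) ∂pm).toReal := by
    intro w
    exact integral_eq_lintegral_of_nonneg_ae (ae_of_all _ fun z => hΦnn (w, z))
      ((mΦ.comp measurable_prodMk_left).aestronglyMeasurable)
  set K : (Fin d → ℝ) → ENNReal := fun w => ∫⁻ z, ENNReal.ofReal (Φ (w, z)) ∂pm with hK
  have hKmeas : Measurable K :=
    Measurable.lintegral_prod_right (f := fun w z => ENNReal.ofReal (Φ (w, z)))
      mΦ.ennreal_ofReal
  have houter : (∫ w, ∫ z, Φ (w, z) ∂pm ∂γhat) =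
      (∫⁻ w, ENNReal.ofReal ((K w).toReal) ∂γhat).toReal := by
    have : (fun w => ∫ z, Φ (w, z) ∂pm) = fun w => (K w).toReal := funext hinner
    rw [this]
    exact integral_eq_lintegral_of_nonneg_ae (ae_of_all _ fun w => ENNReal.toReal_nonneg)
      (hKmeas.ennreal_toReal.aestronglyMeasurable)
  have hXle : (∫⁻ w, ENNReal.ofReal ((K w).toReal) ∂γhat) ≤
      ∫⁻ q, ENNReal.ofReal (Φ q) ∂(γhat.prod pm) := by
    rw [lintegral_prod (fun q => ENNReal.ofReal (Φ q)) mΦ.ennreal_ofReal.aemeasurable]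
    exact lintegral_mono fun w => ENNReal.ofReal_toReal_le
  -- finish
  set R : ℝ := (Real.sqrt C₂v + Real.sqrt C₃v) * (Real.sqrt C₁ * Real.sqrt E) with hR
  have hR0 : 0 ≤ R :=
    mul_nonneg (add_nonneg (Real.sqrt_nonneg _) (Real.sqrt_nonneg _))
      (mul_nonneg (Real.sqrt_nonneg _) (Real.sqrt_nonneg _))
  have hfinal : (∫ w, ∫ z, Φ (w, z) ∂pm ∂γhat) ≤ R := by
    rw [houter]
    calc (∫⁻ w, ENNReal.ofReal ((K w).toReal) ∂γhat).toReal
        ≤ (ENNReal.ofReal R).toReal := by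
          refine ENNReal.toReal_mono ENNReal.ofReal_ne_top ?_
          exact (hXle.trans hL)
      _ = R := ENNReal.toReal_ofReal hR0
  have hC₃eq : C₃v = ∫ w, ∫ z,
      frobSq (J z) * ((gopt (S z) - w) ⬝ᵥ (gopt (S z) - w)) ∂pm ∂γhat := by
    rw [hC₃v]
    exact integral_prod _ hC₃
  calc (∫ w, ∫ z, eucNorm ((J z)ᵀ *ᵥ
          ((jac gopt (S z))ᵀ *ᵥ (gopt (S z) - w) - (jac g (S z))ᵀ *ᵥ (g (S z) - w)))
        ∂pm ∂γhat)
      = ∫ w, ∫ z, Φ (w, z) ∂pm ∂γhat := rfl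
    _ ≤ R := hfinal
    _ = (Real.sqrt C₂v + Real.sqrt (∫ w, ∫ z,
            frobSq (J z) * ((gopt (S z) - w) ⬝ᵥ (gopt (S z) - w)) ∂pm ∂γhat)) *
          Real.sqrt C₁ * Real.sqrt E := by
        rw [hR, ← hC₃eq]; ring
end
end

section
/- Let (Y, 𝔅, γ) be a probability space of data. For each y ∈ Y let L^y : ℝᵖ → ℝ be twice continuously differentiable and L̃^y : ℝᵖ → ℝ be differentiable, and let θ†, θ̃† : Y → ℝᵖ be measurable maps. Let R > 0 and λ > 0. Assume for γ-almost every y: (i) ‖θ̃†(y) − θ†(y)‖ ≤ R; (ii) for every θ with ‖θ − θ†(y)‖ ≤ R, the Hessian satisfies ∇²L^y(θ) ⪰ λ I_p (i.e., ∇²L^y(θ) − λ I_p is positive semidefinite); (iii) ∇L^y(θ†(y)) = 0 and ∇L̃^y(θ̃†(y)) = 0. Assume further that the functions y ↦ L^y(θ̃†(y)) − L^y(θ†(y)) and y ↦ ‖∇L^y(θ̃†(y)) − ∇L̃^y(θ̃†(y))‖ are measurable. Then for γ-a.e. y one has L^y(θ̃†(y)) − L^y(θ†(y)) ≥ 0,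 and ∫ √( L^y(θ̃†(y)) − L^y(θ†(y)) ) dγ(y) ≤ (2λ)^{-1/2} ∫ ‖ ∇L^y(θ̃†(y)) − ∇L̃^y(θ̃†(y)) ‖ dγ(y). -/
open MeasureTheory RealInnerProductSpace

noncomputable section

section Aux

variable {p : ℕ}

private lemma grad_inner_eq (f : EuclideanSpace ℝ (Fin p) → ℝ)
    (x v : EuclideanSpace ℝ (Fin p)) :
    ⟪gradient f x, v⟫ = fderiv ℝ f x v :=
  InnerProductSpace.toDual_symm_apply

private lemma gradient_differentiable (f : EuclideanSpace ℝ (Fin p) → ℝ)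
    (hf : ContDiff ℝ 2 f) : Differentiable ℝ (gradient f) := by
  have h1 : Differentiable ℝ (fderiv ℝ f) :=
    (hf.fderiv_right (m := 1) (by norm_num)).differentiable one_ne_zero
  intro x
  exact ((InnerProductSpace.toDual ℝ
    (EuclideanSpace ℝ (Fin p))).symm.toContinuousLinearEquiv.differentiable
    (fderiv ℝ f x)).comp x (h1 x)

/-- Strong convexity inequality along a segment, from a Hessian lower bound. -/
private lemma strong_ineq (f : EuclideanSpace ℝ (Fin p) → ℝ) (hf : ContDiff ℝ 2 f)
    (lam : ℝ) (a b : EuclideanSpace ℝ (Fin p))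
    (hH : ∀ t ∈ Set.Icc (0:ℝ) 1,
      lam * ‖b - a‖ ^ 2 ≤
        ⟪b - a, fderiv ℝ (gradient f) (a + t • (b - a)) (b - a)⟫) :
    f a + ⟪gradient f a, b - a⟫ + lam / 2 * ‖b - a‖ ^ 2 ≤ f b := by
  set v := b - a with hv
  set c : ℝ → EuclideanSpace ℝ (Fin p) := fun t => a + t • v with hcdef
  have hdf : Differentiable ℝ f := hf.differentiable (by norm_num)
  have hdg : Differentiable ℝ (gradient f) := gradient_differentiable f hf
  have hc : ∀ t : ℝ, HasDerivAt c v t := by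
    intro t
    simpa only [id_eq, one_smul] using ((hasDerivAt_id t).smul_const v).const_add a
  -- φ(t) = f (c t), derivative g(t) = ⟪gradient f (c t), v⟫
  set g : ℝ → ℝ := fun t => ⟪gradient f (c t), v⟫ with hgdef
  have hφ : ∀ t : ℝ, HasDerivAt (fun s => f (c s)) (g t) t := by
    intro t
    have h := ((hdf (c t)).hasFDerivAt).comp_hasDerivAt t (hc t)
    simp only [hgdef]
    rw [grad_inner_eq]
    exact h
  -- derivative of g
  have hg' : ∀ t : ℝ, HasDerivAt g (⟪fderiv ℝ (gradient f) (c t) v, v⟫) t := by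
    intro t
    have hu : HasDerivAt (fun s => gradient f (c s)) (fderiv ℝ (gradient f) (c t) v) t :=
      ((hdg (c t)).hasFDerivAt).comp_hasDerivAt t (hc t)
    have h2 := hu.inner ℝ (hasDerivAt_const t v)
    simp only [hgdef]
    simpa only [inner_zero_right, zero_add] using h2
  -- Step A : on [0,1], g t - g 0 ≥ lam ‖v‖² t
  have stepA : ∀ t ∈ Set.Icc (0:ℝ) 1, g 0 + lam * ‖v‖ ^ 2 * t ≤ g t := by
    have hψ : ∀ t : ℝ, HasDerivAt (fun s => g s - lam * ‖v‖ ^ 2 * s)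
        (⟪fderiv ℝ (gradient f) (c t) v, v⟫ - lam * ‖v‖ ^ 2) t := by
      intro t
      have := (hg' t).sub (((hasDerivAt_id t).const_mul (lam * ‖v‖ ^ 2)))
      rw [mul_one] at this; exact this
    have hmono : MonotoneOn (fun s => g s - lam * ‖v‖ ^ 2 * s) (Set.Icc 0 1) := by
      apply monotoneOn_of_deriv_nonneg (convex_Icc 0 1)
      · exact fun t _ => ((hψ t).continuousAt).continuousWithinAt
      · exact fun t _ => ((hψ t).differentiableAt).differentiableWithinAt
      · intro t ht
        rw [interior_Icc] at ht
        rw [(hψ t).deriv]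
        have hh := hH t ⟨ht.1.le, ht.2.le⟩
        rw [real_inner_comm] at hh
        linarith
    intro t ht
    have h0 : (0:ℝ) ∈ Set.Icc (0:ℝ) 1 := by constructor <;> norm_num
    have := hmono h0 ht ht.1
    simp only [mul_zero, sub_zero] at this
    linarith
  -- Step B : χ(t) = f(c t) - g 0 * t - lam/2 ‖v‖² t² is monotone on [0,1]
  have hχ : ∀ t : ℝ, HasDerivAt
      (fun s => f (c s) - g 0 * s - lam / 2 * ‖v‖ ^ 2 * s ^ 2)
      (g t - g 0 - lam * ‖v‖ ^ 2 * t) t := by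
    intro t
    have h2 : HasDerivAt (fun s : ℝ => lam / 2 * ‖v‖ ^ 2 * s ^ 2)
        (lam * ‖v‖ ^ 2 * t) t := by
      have := ((hasDerivAt_pow 2 t).const_mul (lam / 2 * ‖v‖ ^ 2))
      exact this.congr_deriv (by norm_num; ring)
    have := ((hφ t).sub ((hasDerivAt_id t).const_mul (g 0))).sub h2
    rw [mul_one] at this; exact this
  have hmono : MonotoneOn (fun s => f (c s) - g 0 * s - lam / 2 * ‖v‖ ^ 2 * s ^ 2)
      (Set.Icc 0 1) := by
    apply monotoneOn_of_deriv_nonneg (convex_Icc 0 1)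
    · exact fun t _ => ((hχ t).continuousAt).continuousWithinAt
    · exact fun t _ => ((hχ t).differentiableAt).differentiableWithinAt
    · intro t ht
      rw [interior_Icc] at ht
      rw [(hχ t).deriv]
      have := stepA t ⟨ht.1.le, ht.2.le⟩
      linarith
  have h0 : (0:ℝ) ∈ Set.Icc (0:ℝ) 1 := by constructor <;> norm_num
  have h1' : (1:ℝ) ∈ Set.Icc (0:ℝ) 1 := by constructor <;> norm_num
  have key := hmono h0 h1' (by norm_num)
  have hc0 : c 0 = a := by simp [hcdef]
  have hc1 : c 1 = b := by simp [hcdef, hv]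
  have hg0 : g 0 = ⟪gradient f a, v⟫ := by rw [hgdef]; simp [hc0]
  simp only [hc0, hc1, mul_zero, sub_zero, one_pow, mul_one] at key
  rw [hg0] at key
  linarith

end Aux

/-- Corollary 3.3: optimality gap for surrogate-driven lazy map
variational inference, with the explicit Polyak–Łojasiewicz constant.
For γ-a.e. `y` the gap `Lʸ(θ̃†(y)) − Lʸ(θ†(y))` is nonnegative, and
`∫ √(Lʸ(θ̃†) − Lʸ(θ†)) dγ ≤ (2λ)^{-1/2} ∫ ‖∇Lʸ(θ̃†) − ∇L̃ʸ(θ̃†)‖ dγ`. -/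
theorem optimality_gap_bound
    {p : ℕ} {Y : Type*} [MeasurableSpace Y] (γ : Measure Y) [IsProbabilityMeasure γ]
    (L Lt : Y → EuclideanSpace ℝ (Fin p) → ℝ)
    (hL : ∀ y, ContDiff ℝ 2 (L y)) (hLt : ∀ y, Differentiable ℝ (Lt y))
    (θd θtd : Y → EuclideanSpace ℝ (Fin p))
    (hθd : Measurable θd) (hθtd : Measurable θtd)
    (R lam : ℝ) (hR : 0 < R) (hlam : 0 < lam)
    (h1 : ∀ᵐ y ∂γ, ‖θtd y - θd y‖ ≤ R)
    (h2 : ∀ᵐ y ∂γ, ∀ θ : EuclideanSpace ℝ (Fin p), ‖θ - θd y‖ ≤ R →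
      ∀ v : EuclideanSpace ℝ (Fin p), lam * ‖v‖ ^ 2 ≤ ⟪v, fderiv ℝ (gradient (L y)) θ v⟫)
    (h3 : ∀ᵐ y ∂γ, gradient (L y) (θd y) = 0 ∧ gradient (Lt y) (θtd y) = 0)
    (hm1 : Measurable fun y => L y (θtd y) - L y (θd y))
    (hm2 : Measurable fun y => ‖gradient (L y) (θtd y) - gradient (Lt y) (θtd y)‖) :
    (∀ᵐ y ∂γ, 0 ≤ L y (θtd y) - L y (θd y)) ∧
      ∫⁻ y, ENNReal.ofReal (Real.sqrt (L y (θtd y) - L y (θd y))) ∂γ ≤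
        ENNReal.ofReal ((Real.sqrt (2 * lam))⁻¹) *
          ∫⁻ y, ENNReal.ofReal ‖gradient (L y) (θtd y) - gradient (Lt y) (θtd y)‖ ∂γ := by
  -- Pointwise facts for a.e. y
  have hpt : ∀ᵐ y ∂γ, 0 ≤ L y (θtd y) - L y (θd y) ∧
      Real.sqrt (L y (θtd y) - L y (θd y)) ≤
        (Real.sqrt (2 * lam))⁻¹ *
          ‖gradient (L y) (θtd y) - gradient (Lt y) (θtd y)‖ := by
    filter_upwards [h1, h2, h3] with y hy1 hy2 hy3
    set a := θd y
    set b := θtd y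
    have hfa : gradient (L y) a = 0 := hy3.1
    -- first direction : a = θd, b = θtd
    have key1 : L y a + ⟪gradient (L y) a, b - a⟫ + lam / 2 * ‖b - a‖ ^ 2 ≤ L y b := by
      apply strong_ineq (L y) (hL y) lam a b
      intro t ht
      apply hy2
      have : a + t • (b - a) - a = t • (b - a) := by module
      rw [this, norm_smul]
      calc ‖t‖ * ‖b - a‖ ≤ 1 * R := by
            apply mul_le_mul _ hy1 (norm_nonneg _) zero_le_one
            rw [Real.norm_eq_abs, abs_of_nonneg ht.1]; exact ht.2
        _ = R := one_mul R
    have hgap : 0 ≤ L y b - L y a := by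
      rw [hfa] at key1
      simp only [inner_zero_left, add_zero] at key1
      nlinarith [sq_nonneg ‖b - a‖, hlam.le, mul_nonneg hlam.le (sq_nonneg ‖b - a‖)]
    refine ⟨hgap, ?_⟩
    -- second direction : from b back to a, PL inequality
    set g := gradient (L y) b with hg
    have key2 : L y b + ⟪g, a - b⟫ + lam / 2 * ‖a - b‖ ^ 2 ≤ L y a := by
      apply strong_ineq (L y) (hL y) lam b a
      intro t ht
      apply hy2
      have heq : b + t • (a - b) - a = (1 - t) • (b - a) := by module
      rw [heq, norm_smul]
      calc ‖(1:ℝ) - t‖ * ‖b - a‖ ≤ 1 * R := by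
            apply mul_le_mul _ hy1 (norm_nonneg _) zero_le_one
            rw [Real.norm_eq_abs, abs_of_nonneg (by linarith [ht.2])]
            linarith [ht.1]
        _ = R := one_mul R
    have hinner : -⟪g, a - b⟫ ≤ ‖g‖ * ‖a - b‖ := by
      have := abs_real_inner_le_norm g (a - b)
      cases' abs_le.mp this with h _
      linarith
    have hgaple : L y b - L y a ≤ ‖g‖ ^ 2 / (2 * lam) := by
      have h1' : L y b - L y a ≤ -⟪g, a - b⟫ - lam / 2 * ‖a - b‖ ^ 2 := by linarith
      have h2' : ‖g‖ * ‖a - b‖ - lam / 2 * ‖a - b‖ ^ 2 ≤ ‖g‖ ^ 2 / (2 * lam) := by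
        rw [le_div_iff₀ (by positivity : (0:ℝ) < 2 * lam)]
        nlinarith [sq_nonneg (‖g‖ - lam * ‖a - b‖)]
      linarith
    have hgt : gradient (Lt y) b = 0 := hy3.2
    rw [hgt, sub_zero]
    calc Real.sqrt (L y b - L y a) ≤ Real.sqrt (‖g‖ ^ 2 / (2 * lam)) :=
          Real.sqrt_le_sqrt hgaple
      _ = (Real.sqrt (2 * lam))⁻¹ * ‖g‖ := by
          rw [div_eq_mul_inv, Real.sqrt_mul (sq_nonneg _), Real.sqrt_sq (norm_nonneg _),
            Real.sqrt_inv, mul_comm]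
  constructor
  · filter_upwards [hpt] with y hy using hy.1
  · calc ∫⁻ y, ENNReal.ofReal (Real.sqrt (L y (θtd y) - L y (θd y))) ∂γ
        ≤ ∫⁻ y, ENNReal.ofReal ((Real.sqrt (2 * lam))⁻¹) *
            ENNReal.ofReal ‖gradient (L y) (θtd y) - gradient (Lt y) (θtd y)‖ ∂γ := by
          apply lintegral_mono_ae
          filter_upwards [hpt] with y hy
          rw [← ENNReal.ofReal_mul (by positivity)]
          exact ENNReal.ofReal_le_ofReal hy.2
      _ = ENNReal.ofReal ((Real.sqrt (2 * lam))⁻¹) *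
            ∫⁻ y, ENNReal.ofReal ‖gradient (L y) (θtd y) - gradient (Lt y) (θtd y)‖ ∂γ :=
          lintegral_const_mul' _ _ ENNReal.ofReal_ne_top
end
end

section
/- Consider the Gaussian prior, projection, and lazy-map setting. Then the pushforward T#μ of μ under the lazy map T is absolutely continuous with respect to μ, with density d(T#μ)/dμ(m) = det(∇S⁻¹(Em)) · exp( ½‖Em‖² − ½‖S⁻¹(Em)‖² ) for μ-almost every m. In particular, the density depends on m only through the latent coordinate Em, and equals the ratio of the Lebesgue density of S#π to the Lebesgue density of π evaluated at Em. -/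
open MeasureTheory Matrix Real

noncomputable section

/-- The complement prior `μ⊥`: pushforward of `μ = N(0,C)` under `m ↦ (I − P)m`,
where `P = Ψ(ΨᵀC⁻¹)` is the projector onto the reduced subspace. -/
def compPrior {n r : ℕ} (C : Matrix (Fin n) (Fin n) ℝ) (Ψ : Matrix (Fin n) (Fin r) ℝ) :
    Measure (Fin n → ℝ) :=
  (gaussianOf 0 C).map fun m => m - (Ψ * (Ψᵀ * C⁻¹)) *ᵥ m

/-- The lazy map `T(m) = (I − P)m + Ψ S(Em)`, where `E = ΨᵀC⁻¹` and `P = ΨE`. -/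
def lazyMap {n r : ℕ} (C : Matrix (Fin n) (Fin n) ℝ) (Ψ : Matrix (Fin n) (Fin r) ℝ)
    (S : (Fin r → ℝ) → (Fin r → ℝ)) (m : Fin n → ℝ) : Fin n → ℝ :=
  (m - (Ψ * (Ψᵀ * C⁻¹)) *ᵥ m) + Ψ *ᵥ S ((Ψᵀ * C⁻¹) *ᵥ m)

variable {n r : ℕ}

/-- matrix-vector multiplication as a continuous linear map -/
def mvCLM (A : Matrix (Fin r) (Fin n) ℝ) : (Fin n → ℝ) →L[ℝ] (Fin r → ℝ) :=
  LinearMap.toContinuousLinearMap A.mulVecLin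

@[simp] lemma mvCLM_apply (A : Matrix (Fin r) (Fin n) ℝ) (v : Fin n → ℝ) :
    mvCLM A v = A *ᵥ v := rfl

lemma jac_eq_toMatrix' (f : (Fin n → ℝ) → Fin r → ℝ) (x : Fin n → ℝ) :
    jac f x = LinearMap.toMatrix' ((fderiv ℝ f x : (Fin n → ℝ) →L[ℝ] (Fin r → ℝ)) :
      (Fin n → ℝ) →ₗ[ℝ] (Fin r → ℝ)) := by
  ext i j
  rw [LinearMap.toMatrix'_apply]
  simp only [jac, Matrix.of_apply, ContinuousLinearMap.coe_coe]

lemma jac_det (f : (Fin n → ℝ) → Fin n → ℝ) (x : Fin n → ℝ) :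
    (jac f x).det = (fderiv ℝ f x).det := by
  rw [jac_eq_toMatrix', LinearMap.det_toMatrix']

end
noncomputable section
variable {n r : ℕ} (C : Matrix (Fin n) (Fin n) ℝ) (Ψ : Matrix (Fin n) (Fin r) ℝ)

lemma cinv_symm (hC : C.PosDef) : (C⁻¹)ᵀ = C⁻¹ := by
  have hCT : Cᵀ = C := by
    rw [← Matrix.conjTranspose_eq_transpose_of_trivial]; exact hC.isHermitian
  rw [Matrix.transpose_nonsing_inv, hCT]

lemma swap_dot (hC : C.PosDef) (v : Fin n → ℝ) (z : Fin r → ℝ) :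
    v ⬝ᵥ C⁻¹ *ᵥ (Ψ *ᵥ z) = ((Ψᵀ * C⁻¹) *ᵥ v) ⬝ᵥ z := by
  rw [Matrix.mulVec_mulVec, dotProduct_mulVec, ← Matrix.mulVec_transpose,
    Matrix.transpose_mul, cinv_symm C hC]

lemma sym_dot (hC : C.PosDef) (v w : Fin n → ℝ) :
    v ⬝ᵥ C⁻¹ *ᵥ w = (C⁻¹ *ᵥ v) ⬝ᵥ w := by
  rw [dotProduct_mulVec, ← Matrix.mulVec_transpose, cinv_symm C hC]

/-- key quadratic-form splitting -/
lemma quad_split (hC : C.PosDef) (hΨ : Ψᵀ * C⁻¹ * Ψ = 1) (x : Fin n → ℝ) (z : Fin r → ℝ) :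
    ((x - (Ψ * (Ψᵀ * C⁻¹)) *ᵥ x) + Ψ *ᵥ z) ⬝ᵥ C⁻¹ *ᵥ ((x - (Ψ * (Ψᵀ * C⁻¹)) *ᵥ x) + Ψ *ᵥ z)
      = x ⬝ᵥ C⁻¹ *ᵥ x - ((Ψᵀ * C⁻¹) *ᵥ x) ⬝ᵥ ((Ψᵀ * C⁻¹) *ᵥ x) + z ⬝ᵥ z := by
  have hswap : ∀ (v : Fin n → ℝ) (w : Fin r → ℝ),
      v ⬝ᵥ C⁻¹ *ᵥ (Ψ *ᵥ w) = ((Ψᵀ * C⁻¹) *ᵥ v) ⬝ᵥ w := fun v w => swap_dot C Ψ hC v w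
  have hswap2 : ∀ (w : Fin r → ℝ) (v : Fin n → ℝ),
      (Ψ *ᵥ w) ⬝ᵥ C⁻¹ *ᵥ v = w ⬝ᵥ ((Ψᵀ * C⁻¹) *ᵥ v) := by
    intro w v
    rw [sym_dot C hC (Ψ *ᵥ w) v, dotProduct_comm (C⁻¹ *ᵥ (Ψ *ᵥ w)) v,
      hswap v w, dotProduct_comm]
  have hEΨv : ∀ w : Fin r → ℝ, (Ψᵀ * C⁻¹) *ᵥ (Ψ *ᵥ w) = w := by
    intro w; rw [Matrix.mulVec_mulVec, hΨ, Matrix.one_mulVec]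
  rw [← Matrix.mulVec_mulVec x Ψ (Ψᵀ * C⁻¹)]
  simp only [Matrix.mulVec_add, Matrix.mulVec_sub, dotProduct_add, dotProduct_sub,
    add_dotProduct, sub_dotProduct, hswap, hswap2, hEΨv]
  ring
noncomputable section
variable {n r : ℕ} (C : Matrix (Fin n) (Fin n) ℝ) (Ψ : Matrix (Fin n) (Fin r) ℝ)

lemma lazyMap_comp (hΨ : Ψᵀ * C⁻¹ * Ψ = 1) (S S' : (Fin r → ℝ) → Fin r → ℝ)
    (hli : Function.LeftInverse S' S) (m : Fin n → ℝ) :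
    lazyMap C Ψ S' (lazyMap C Ψ S m) = m := by
  have hEΨv : ∀ w : Fin r → ℝ, (Ψᵀ * C⁻¹) *ᵥ (Ψ *ᵥ w) = w := by
    intro w; rw [Matrix.mulVec_mulVec, hΨ, Matrix.one_mulVec]
  simp only [lazyMap]
  have h1 : (Ψᵀ * C⁻¹) *ᵥ ((m - (Ψ * (Ψᵀ * C⁻¹)) *ᵥ m) + Ψ *ᵥ S ((Ψᵀ * C⁻¹) *ᵥ m))
      = S ((Ψᵀ * C⁻¹) *ᵥ m) := by
    rw [Matrix.mulVec_add, Matrix.mulVec_sub, hEΨv, Matrix.mulVec_mulVec,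
      ← Matrix.mul_assoc, hΨ, Matrix.one_mul]
    abel
  have h2 : (Ψ * (Ψᵀ * C⁻¹)) *ᵥ ((m - (Ψ * (Ψᵀ * C⁻¹)) *ᵥ m) + Ψ *ᵥ S ((Ψᵀ * C⁻¹) *ᵥ m))
      = Ψ *ᵥ S ((Ψᵀ * C⁻¹) *ᵥ m) := by
    rw [← Matrix.mulVec_mulVec, h1]
  rw [h1, h2, hli ((Ψᵀ * C⁻¹) *ᵥ m), Matrix.mulVec_mulVec]
  abel

lemma det_lin (hΨ : Ψᵀ * C⁻¹ * Ψ = 1) (J : Matrix (Fin r) (Fin r) ℝ) :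
    ((1 - Ψ * (Ψᵀ * C⁻¹)) + Ψ * J * (Ψᵀ * C⁻¹)).det = J.det := by
  have h1 : (1 - Ψ * (Ψᵀ * C⁻¹)) + Ψ * J * (Ψᵀ * C⁻¹)
      = 1 + (Ψ * (J - 1)) * (Ψᵀ * C⁻¹) := by
    rw [Matrix.mul_sub, Matrix.mul_one, Matrix.sub_mul]; abel
  have h2 : 1 + (Ψᵀ * C⁻¹) * (Ψ * (J - 1)) = J := by
    rw [← Matrix.mul_assoc, hΨ, Matrix.one_mul]; abel
  rw [h1, Matrix.det_one_add_mul_comm, h2]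

lemma lazyMap_hasFDerivAt (S : (Fin r → ℝ) → Fin r → ℝ) (hS : ContDiff ℝ 1 S) (x : Fin n → ℝ) :
    HasFDerivAt (lazyMap C Ψ S)
      ((ContinuousLinearMap.id ℝ (Fin n → ℝ) - mvCLM (Ψ * (Ψᵀ * C⁻¹))) +
       (mvCLM Ψ).comp ((fderiv ℝ S ((Ψᵀ * C⁻¹) *ᵥ x)).comp (mvCLM (Ψᵀ * C⁻¹)))) x := by
  have h1 : HasFDerivAt (fun m : Fin n → ℝ => m - (Ψ * (Ψᵀ * C⁻¹)) *ᵥ m)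
      (ContinuousLinearMap.id ℝ (Fin n → ℝ) - mvCLM (Ψ * (Ψᵀ * C⁻¹))) x :=
    (hasFDerivAt_id x).sub (mvCLM (Ψ * (Ψᵀ * C⁻¹))).hasFDerivAt
  have h2 : HasFDerivAt (fun m : Fin n → ℝ => Ψ *ᵥ S ((Ψᵀ * C⁻¹) *ᵥ m))
      ((mvCLM Ψ).comp ((fderiv ℝ S ((Ψᵀ * C⁻¹) *ᵥ x)).comp (mvCLM (Ψᵀ * C⁻¹)))) x := by
    have ha : HasFDerivAt (fun m : Fin n → ℝ => (Ψᵀ * C⁻¹) *ᵥ m) (mvCLM (Ψᵀ * C⁻¹)) x :=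
      (mvCLM (Ψᵀ * C⁻¹)).hasFDerivAt
    have hb : HasFDerivAt S (fderiv ℝ S ((Ψᵀ * C⁻¹) *ᵥ x)) ((Ψᵀ * C⁻¹) *ᵥ x) :=
      (hS.differentiable one_ne_zero _).hasFDerivAt
    have hc := ((mvCLM Ψ).hasFDerivAt.comp x (hb.comp x ha) :)
    exact hc
  exact h1.add h2

lemma jac_inv_pos (S Sinv : (Fin r → ℝ) → Fin r → ℝ)
    (hS : ContDiff ℝ 1 S) (hSinv : ContDiff ℝ 1 Sinv)
    (hli : Function.LeftInverse Sinv S) (hri : Function.RightInverse Sinv S)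
    (hdet : ∀ z, 0 < (jac S z).det) (z : Fin r → ℝ) : 0 < (jac Sinv z).det := by
  have hcomp : fderiv ℝ (Sinv ∘ S) (Sinv z)
      = (fderiv ℝ Sinv (S (Sinv z))).comp (fderiv ℝ S (Sinv z)) :=
    fderiv_comp _ (hSinv.differentiable one_ne_zero _) (hS.differentiable one_ne_zero _)
  have hid : fderiv ℝ (Sinv ∘ S) (Sinv z) = ContinuousLinearMap.id ℝ (Fin r → ℝ) := by
    rw [hli.comp_eq_id]; exact fderiv_id
  have hdets : (jac Sinv z).det * (jac S (Sinv z)).det = 1 := by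
    rw [jac_det, jac_det]
    have := hid ▸ hcomp
    have hdetc : (ContinuousLinearMap.id ℝ (Fin r → ℝ)).det
        = ((fderiv ℝ Sinv (S (Sinv z))).comp (fderiv ℝ S (Sinv z))).det := by rw [← this]
    rw [hri z] at hdetc
    unfold ContinuousLinearMap.det at hdetc
    rw [ContinuousLinearMap.toLinearMap_comp, LinearMap.det_comp, ContinuousLinearMap.coe_id,
      LinearMap.det_id] at hdetc
    exact hdetc.symm
  have h2 := hdet (Sinv z)
  have : (jac Sinv z).det = ((jac S (Sinv z)).det)⁻¹ := eq_inv_of_mul_eq_one_left ?_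
  · rw [this]; exact inv_pos.2 h2
  · rw [mul_comm] at hdets ⊢; exact hdets
noncomputable section
open scoped ENNReal

lemma map_withDensity_comp {α β : Type*} [MeasurableSpace α] [MeasurableSpace β]
    (ν : Measure α) {f : α → β} (hf : Measurable f) {g : β → ℝ≥0∞} (hg : Measurable g) :
    Measure.map f (ν.withDensity (g ∘ f)) = (Measure.map f ν).withDensity g := by
  ext s hs
  rw [Measure.map_apply hf hs, withDensity_apply _ (hf hs), withDensity_apply _ hs,
    setLIntegral_map hs hg hf]
  rfl

lemma lintegral_indicator_comp' {α β : Type*} [MeasurableSpace α] [MeasurableSpace β]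
    (μ : Measure α) {g : α → β} (hg : Measurable g) {N : Set β} (hN : MeasurableSet N) :
    ∫⁻ a, N.indicator (fun _ => (1 : ℝ≥0∞)) (g a) ∂μ = μ (g ⁻¹' N) := by
  have h : ∀ a, N.indicator (fun _ => (1 : ℝ≥0∞)) (g a)
      = (g ⁻¹' N).indicator (fun _ => (1 : ℝ≥0∞)) a := by
    intro a; by_cases hmem : g a ∈ N <;> simp [Set.indicator_apply, hmem]
  simp_rw [h]
  rw [lintegral_indicator (hg hN), setLIntegral_one]

lemma preimage_mulVec_null {n r : ℕ} (E : Matrix (Fin r) (Fin n) ℝ)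
    (Ψ : Matrix (Fin n) (Fin r) ℝ) (hEΨ : E * Ψ = 1) {N : Set (Fin r → ℝ)}
    (hN : MeasurableSet N) (h0 : volume N = 0) :
    volume {m : Fin n → ℝ | E *ᵥ m ∈ N} = 0 := by
  have hEcont : Continuous fun m : Fin n → ℝ => E *ᵥ m :=
    continuous_const.matrix_mulVec continuous_id
  have hmeasg : Measurable fun m : Fin n → ℝ => E *ᵥ m := hEcont.measurable
  set c := volume {m : Fin n → ℝ | E *ᵥ m ∈ N} with hc
  have htrans : ∀ v : Fin r → ℝ,
      volume ((fun m : Fin n → ℝ => E *ᵥ m + v) ⁻¹' N) = c := by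
    intro v
    have hset : (fun m : Fin n → ℝ => E *ᵥ m + v) ⁻¹' N
        = (fun m => m + Ψ *ᵥ v) ⁻¹' {m : Fin n → ℝ | E *ᵥ m ∈ N} := by
      ext m
      simp only [Set.mem_setOf_eq, Set.mem_preimage, Matrix.mulVec_add,
        Matrix.mulVec_mulVec, hEΨ, Matrix.one_mulVec]
    rw [hset, measure_preimage_add_right]
  have hgm : Measurable fun p : (Fin r → ℝ) × (Fin n → ℝ) => E *ᵥ p.2 + p.1 :=
    ((continuous_const.matrix_mulVec continuous_snd).add continuous_fst).measurable
  have hfun : Measurable fun p : (Fin r → ℝ) × (Fin n → ℝ) =>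
      N.indicator (fun _ => (1 : ℝ≥0∞)) (E *ᵥ p.2 + p.1) :=
    (measurable_const.indicator hN).comp hgm
  have key : ∫⁻ v : Fin r → ℝ, ∫⁻ m : Fin n → ℝ,
      N.indicator (fun _ => (1 : ℝ≥0∞)) (E *ᵥ m + v) = 0 := by
    rw [lintegral_lintegral_swap hfun.aemeasurable]
    have inner0 : ∀ m : Fin n → ℝ,
        ∫⁻ v : Fin r → ℝ, N.indicator (fun _ => (1 : ℝ≥0∞)) (E *ᵥ m + v) = 0 := by
      intro m
      rw [lintegral_indicator_comp' volume
        (show Measurable fun v : Fin r → ℝ => E *ᵥ m + v from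
          measurable_const.add measurable_id) hN]
      rw [measure_preimage_add volume (E *ᵥ m) N]
      exact h0
    calc ∫⁻ m : Fin n → ℝ, ∫⁻ v : Fin r → ℝ,
          N.indicator (fun _ => (1 : ℝ≥0∞)) (E *ᵥ m + v)
        = ∫⁻ _m : Fin n → ℝ, (0 : ℝ≥0∞) := lintegral_congr inner0
      _ = 0 := lintegral_zero
  have key2 : ∫⁻ v : Fin r → ℝ, ∫⁻ m : Fin n → ℝ,
      N.indicator (fun _ => (1 : ℝ≥0∞)) (E *ᵥ m + v)
      = c * volume (Set.univ : Set (Fin r → ℝ)) := by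
    have hinner : ∀ v : Fin r → ℝ, ∫⁻ m : Fin n → ℝ,
        N.indicator (fun _ => (1 : ℝ≥0∞)) (E *ᵥ m + v) = c := by
      intro v
      rw [lintegral_indicator_comp' volume
        (show Measurable fun m : Fin n → ℝ => E *ᵥ m + v from hmeasg.add_const v) hN]
      exact htrans v
    simp_rw [hinner]
    exact lintegral_const c
  rw [key] at key2
  have huniv : volume (Set.univ : Set (Fin r → ℝ)) ≠ 0 :=
    (isOpen_univ.measure_ne_zero volume ⟨0, trivial⟩)
  rcases mul_eq_zero.mp key2.symm with h | h
  · exact h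
  · exact absurd h huniv
noncomputable section
open scoped ENNReal

variable {n r : ℕ}

lemma toMatrix'_mulVecLin {a b : ℕ} (A : Matrix (Fin a) (Fin b) ℝ) :
    LinearMap.toMatrix' A.mulVecLin = A := by
  rw [← Matrix.toLin'_apply', LinearMap.toMatrix'_toLin']

lemma jacF_cont (Sinv : (Fin r → ℝ) → Fin r → ℝ) (hSinv : ContDiff ℝ 1 Sinv) :
    Continuous fun z => (jac Sinv z).det := by
  refine Continuous.matrix_det (continuous_matrix fun i j => ?_)
  have h1 : Continuous fun z => fderiv ℝ Sinv z (Pi.single j 1) :=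
    (hSinv.continuous_fderiv one_ne_zero).clm_apply continuous_const
  exact (continuous_apply i).comp h1

lemma dens_cont (Sinv : (Fin r → ℝ) → Fin r → ℝ) (hSinv : ContDiff ℝ 1 Sinv) :
    Continuous fun z : Fin r → ℝ => ENNReal.ofReal ((jac Sinv z).det *
      Real.exp ((1/2) * (z ⬝ᵥ z) - (1/2) * (Sinv z ⬝ᵥ Sinv z))) := by
  refine ENNReal.continuous_ofReal.comp ?_
  refine (jacF_cont Sinv hSinv).mul (Real.continuous_exp.comp ?_)
  refine Continuous.sub ?_ ?_
  · exact continuous_const.mul (continuous_id.dotProduct continuous_id)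
  · exact continuous_const.mul
      ((hSinv.continuous).dotProduct (hSinv.continuous))

/-- the big change-of-variables computation -/
lemma main_map (C : Matrix (Fin n) (Fin n) ℝ) (hC : C.PosDef)
    (Ψ : Matrix (Fin n) (Fin r) ℝ) (hΨ : Ψᵀ * C⁻¹ * Ψ = 1)
    (S Sinv : (Fin r → ℝ) → (Fin r → ℝ))
    (hS : ContDiff ℝ 1 S) (hSinv : ContDiff ℝ 1 Sinv)
    (hli : Function.LeftInverse Sinv S) (hri : Function.RightInverse Sinv S)
    (hdet : ∀ z, 0 < (jac S z).det) :
    (gaussianOf 0 C).map (lazyMap C Ψ S) =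
      (gaussianOf 0 C).withDensity (fun m => ENNReal.ofReal
        ((jac Sinv ((Ψᵀ * C⁻¹) *ᵥ m)).det *
          Real.exp ((1/2) * (((Ψᵀ * C⁻¹) *ᵥ m) ⬝ᵥ ((Ψᵀ * C⁻¹) *ᵥ m))
            - (1/2) * (Sinv ((Ψᵀ * C⁻¹) *ᵥ m) ⬝ᵥ Sinv ((Ψᵀ * C⁻¹) *ᵥ m))))) := by
  have hjpos : ∀ z, 0 < (jac Sinv z).det := jac_inv_pos S Sinv hS hSinv hli hri hdet
  set T := lazyMap C Ψ S with hT
  set Tinv := lazyMap C Ψ Sinv with hTinvdef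
  set L : (Fin n → ℝ) → (Fin n → ℝ) →L[ℝ] (Fin n → ℝ) := fun x =>
    (ContinuousLinearMap.id ℝ (Fin n → ℝ) - mvCLM (Ψ * (Ψᵀ * C⁻¹))) +
      (mvCLM Ψ).comp ((fderiv ℝ Sinv ((Ψᵀ * C⁻¹) *ᵥ x)).comp (mvCLM (Ψᵀ * C⁻¹))) with hL
  have hTinv_deriv : ∀ x, HasFDerivAt Tinv (L x) x := fun x =>
    lazyMap_hasFDerivAt C Ψ Sinv hSinv x
  have hdetL : ∀ x, (L x).det = (jac Sinv ((Ψᵀ * C⁻¹) *ᵥ x)).det := by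
    intro x
    unfold ContinuousLinearMap.det
    rw [← LinearMap.det_toMatrix' (↑(L x) : (Fin n → ℝ) →ₗ[ℝ] (Fin n → ℝ))]
    have : LinearMap.toMatrix' (↑(L x) : (Fin n → ℝ) →ₗ[ℝ] (Fin n → ℝ))
        = (1 - Ψ * (Ψᵀ * C⁻¹)) + Ψ * (jac Sinv ((Ψᵀ * C⁻¹) *ᵥ x)) * (Ψᵀ * C⁻¹) := by
      rw [hL]
      simp only [ContinuousLinearMap.coe_add, ContinuousLinearMap.coe_sub,
        ContinuousLinearMap.coe_id, ContinuousLinearMap.coe_comp, map_add, map_sub,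
        LinearMap.toMatrix'_id, LinearMap.toMatrix'_comp]
      rw [show ((mvCLM (Ψ * (Ψᵀ * C⁻¹)) : (Fin n → ℝ) →L[ℝ] (Fin n → ℝ)) :
          (Fin n → ℝ) →ₗ[ℝ] (Fin n → ℝ)) = (Ψ * (Ψᵀ * C⁻¹)).mulVecLin from rfl]
      rw [ContinuousLinearMap.toLinearMap_comp, ContinuousLinearMap.toLinearMap_comp, LinearMap.toMatrix'_comp,
        LinearMap.toMatrix'_comp]
      rw [show ((mvCLM Ψ : (Fin r → ℝ) →L[ℝ] (Fin n → ℝ)) :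
          (Fin r → ℝ) →ₗ[ℝ] (Fin n → ℝ)) = Ψ.mulVecLin from rfl]
      rw [show ((mvCLM (Ψᵀ * C⁻¹) : (Fin n → ℝ) →L[ℝ] (Fin r → ℝ)) :
          (Fin n → ℝ) →ₗ[ℝ] (Fin r → ℝ)) = (Ψᵀ * C⁻¹).mulVecLin from rfl]
      rw [toMatrix'_mulVecLin, toMatrix'_mulVecLin, toMatrix'_mulVecLin,
        ← jac_eq_toMatrix']
      rw [Matrix.mul_assoc]
    rw [this, det_lin C Ψ hΨ]
  have hTinv_diff : Differentiable ℝ Tinv := fun x => (hTinv_deriv x).differentiableAt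
  have hTinv_cont : Continuous Tinv := hTinv_diff.continuous
  have hT_diff : Differentiable ℝ T := fun x =>
    (lazyMap_hasFDerivAt C Ψ S hS x).differentiableAt
  have hT_cont : Continuous T := hT_diff.continuous
  have hTTinv : ∀ m, T (Tinv m) = m := fun m => lazyMap_comp C Ψ hΨ Sinv S hri m
  have hTinvT : ∀ m, Tinv (T m) = m := fun m => lazyMap_comp C Ψ hΨ S Sinv hli m
  -- the change of variables for Lebesgue measure
  set D : (Fin n → ℝ) → ℝ≥0∞ := fun x => ENNReal.ofReal |(L x).det| with hD
  have hD_eq : D = fun x => ENNReal.ofReal ((jac Sinv ((Ψᵀ * C⁻¹) *ᵥ x)).det) := by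
    funext x
    rw [hD]
    simp only
    rw [hdetL x, abs_of_pos (hjpos _)]
  have hD_meas : Measurable D := by
    rw [hD_eq]
    refine (ENNReal.continuous_ofReal.comp ?_).measurable
    exact (jacF_cont Sinv hSinv).comp (continuous_const.matrix_mulVec continuous_id)
  have key : Measure.map Tinv (volume.withDensity D) = volume := by
    have h1 := map_withDensity_abs_det_fderiv_eq_addHaar volume MeasurableSet.univ.nullMeasurableSet
      (fun x _ => (hTinv_deriv x).hasFDerivWithinAt)
      (Function.LeftInverse.injective hTTinv).injOn
    rw [Measure.restrict_univ] at h1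
    have h2 : Tinv '' Set.univ = Set.univ := by
      rw [Set.image_univ, Set.range_eq_univ]
      exact fun m => ⟨T m, hTinvT m⟩
    rw [h2, Measure.restrict_univ] at h1
    exact h1
  set ρ : (Fin n → ℝ) → ℝ≥0∞ := fun m =>
    ENNReal.ofReal (((2 * π) ^ n * C.det) ^ (-(1 : ℝ) / 2) *
      Real.exp (-(1 / 2) * ((m - 0) ⬝ᵥ C⁻¹ *ᵥ (m - 0)))) with hρ
  have hgauss : gaussianOf 0 C = volume.withDensity ρ := rfl
  have hρ_meas : Measurable ρ := by
    refine (ENNReal.continuous_ofReal.comp ?_).measurable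
    refine continuous_const.mul (Real.continuous_exp.comp (continuous_const.mul ?_))
    exact (continuous_id.sub continuous_const).dotProduct
      (continuous_const.matrix_mulVec (continuous_id.sub continuous_const))
  set dens : (Fin n → ℝ) → ℝ≥0∞ := fun m => ENNReal.ofReal
      ((jac Sinv ((Ψᵀ * C⁻¹) *ᵥ m)).det *
        Real.exp ((1/2) * (((Ψᵀ * C⁻¹) *ᵥ m) ⬝ᵥ ((Ψᵀ * C⁻¹) *ᵥ m))
          - (1/2) * (Sinv ((Ψᵀ * C⁻¹) *ᵥ m) ⬝ᵥ Sinv ((Ψᵀ * C⁻¹) *ᵥ m)))) with hdens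
  have hdens_meas : Measurable dens :=
    ((dens_cont Sinv hSinv).comp
      (continuous_const.matrix_mulVec continuous_id)).measurable
  have e1 : Measure.map Tinv ((volume.withDensity D).withDensity (ρ ∘ Tinv))
      = gaussianOf 0 C := by
    rw [map_withDensity_comp (volume.withDensity D) hTinv_cont.measurable hρ_meas,
      key, hgauss]
  have e2 : Measure.map T (gaussianOf 0 C)
      = (volume.withDensity D).withDensity (ρ ∘ Tinv) := by
    rw [← e1, Measure.map_map hT_cont.measurable hTinv_cont.measurable]
    have hco : T ∘ Tinv = id := funext hTTinv
    rw [hco, Measure.map_id]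
  have e3 : (volume.withDensity D).withDensity (ρ ∘ Tinv)
      = volume.withDensity (fun x => D x * ρ (Tinv x)) := by
    rw [← withDensity_mul volume hD_meas (hρ_meas.comp hTinv_cont.measurable)]
    rfl
  have hcnn : (0:ℝ) ≤ ((2 * π) ^ n * C.det) ^ (-(1 : ℝ) / 2) := by
    refine Real.rpow_nonneg ?_ _
    exact mul_nonneg (pow_nonneg (by positivity) n) hC.det_pos.le
  have e4 : ∀ x, D x * ρ (Tinv x) = ρ x * dens x := by
    intro x
    have hq := quad_split C Ψ hC hΨ x (Sinv ((Ψᵀ * C⁻¹) *ᵥ x))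
    have hTx : Tinv x = (x - (Ψ * (Ψᵀ * C⁻¹)) *ᵥ x) + Ψ *ᵥ Sinv ((Ψᵀ * C⁻¹) *ᵥ x) := rfl
    rw [hD_eq]
    simp only [hρ, hdens, sub_zero]
    rw [hTx, hq]
    rw [← ENNReal.ofReal_mul (le_of_lt (hjpos _)),
      ← ENNReal.ofReal_mul (mul_nonneg hcnn (Real.exp_pos _).le)]
    congr 1
    rw [show -(1 / 2 : ℝ) * ((x ⬝ᵥ C⁻¹ *ᵥ x)
          - (((Ψᵀ * C⁻¹) *ᵥ x) ⬝ᵥ ((Ψᵀ * C⁻¹) *ᵥ x))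
          + (Sinv ((Ψᵀ * C⁻¹) *ᵥ x) ⬝ᵥ Sinv ((Ψᵀ * C⁻¹) *ᵥ x)))
        = (-(1 / 2) * (x ⬝ᵥ C⁻¹ *ᵥ x))
          + ((1/2) * (((Ψᵀ * C⁻¹) *ᵥ x) ⬝ᵥ ((Ψᵀ * C⁻¹) *ᵥ x))
            - (1/2) * (Sinv ((Ψᵀ * C⁻¹) *ᵥ x) ⬝ᵥ Sinv ((Ψᵀ * C⁻¹) *ᵥ x))) from by ring,
      Real.exp_add]
    ring
  have e5 : volume.withDensity (fun x => D x * ρ (Tinv x))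
      = (gaussianOf 0 C).withDensity dens := by
    rw [show (fun x => D x * ρ (Tinv x)) = fun x => ρ x * dens x from funext e4]
    rw [show (fun x => ρ x * dens x) = ρ * dens from rfl]
    rw [withDensity_mul volume hρ_meas hdens_meas, ← hgauss]
  rw [e2, e3, e5]
noncomputable section
open scoped ENNReal

instance gaussSF {n : ℕ} (m₀ : Fin n → ℝ) (C : Matrix (Fin n) (Fin n) ℝ) :
    SigmaFinite (gaussianOf m₀ C) := by
  unfold gaussianOf; infer_instance

lemma lazyMap_one {r : ℕ} (S : (Fin r → ℝ) → Fin r → ℝ) :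
    lazyMap (1 : Matrix (Fin r) (Fin r) ℝ) 1 S = S := by
  funext m
  simp [lazyMap, Matrix.transpose_one, inv_one, Matrix.mul_one, Matrix.one_mul,
    Matrix.one_mulVec]


/-- lazy map pushforward density, eq. (lazy_map_density).
`T#μ ≪ μ` with density
`d(T#μ)/dμ(m) = det ∇S⁻¹(Em) · exp(½‖Em‖² − ½‖S⁻¹(Em)‖²)`; in particular the
density depends on `m` only through `Em` and equals the density of `S#π`
with respect to `π` evaluated at `Em`. -/
theorem lazy_map_pushforward_density
    {n r : ℕ} (C : Matrix (Fin n) (Fin n) ℝ) (hC : C.PosDef)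
    (Ψ : Matrix (Fin n) (Fin r) ℝ) (hΨ : Ψᵀ * C⁻¹ * Ψ = 1)
    (S Sinv : (Fin r → ℝ) → (Fin r → ℝ))
    (hS : ContDiff ℝ 1 S) (hSinv : ContDiff ℝ 1 Sinv)
    (hli : Function.LeftInverse Sinv S) (hri : Function.RightInverse Sinv S)
    (hdet : ∀ z, 0 < (jac S z).det) :
    (gaussianOf 0 C).map (lazyMap C Ψ S) ≪ gaussianOf 0 C ∧
      (∀ᵐ m ∂(gaussianOf 0 C),
        ((((gaussianOf 0 C).map (lazyMap C Ψ S)).rnDeriv (gaussianOf 0 C)) m).toReal =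
          (jac Sinv ((Ψᵀ * C⁻¹) *ᵥ m)).det *
            Real.exp ((1 / 2) * (((Ψᵀ * C⁻¹) *ᵥ m) ⬝ᵥ ((Ψᵀ * C⁻¹) *ᵥ m)) -
              (1 / 2) * (Sinv ((Ψᵀ * C⁻¹) *ᵥ m) ⬝ᵥ Sinv ((Ψᵀ * C⁻¹) *ᵥ m)))) ∧
      (∀ᵐ m ∂(gaussianOf 0 C),
        (((gaussianOf 0 C).map (lazyMap C Ψ S)).rnDeriv (gaussianOf 0 C)) m =
          (((stdGaussian r).map S).rnDeriv (stdGaussian r)) ((Ψᵀ * C⁻¹) *ᵥ m)) := by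
  have hjpos : ∀ z, 0 < (jac Sinv z).det := jac_inv_pos S Sinv hS hSinv hli hri hdet
  have hmain := main_map C hC Ψ hΨ S Sinv hS hSinv hli hri hdet
  set F : (Fin r → ℝ) → ℝ≥0∞ := fun z => ENNReal.ofReal ((jac Sinv z).det *
      Real.exp ((1/2) * (z ⬝ᵥ z) - (1/2) * (Sinv z ⬝ᵥ Sinv z))) with hF
  have hF_meas : Measurable F := (dens_cont Sinv hSinv).measurable
  have hdens_meas : Measurable fun m : Fin n → ℝ => F ((Ψᵀ * C⁻¹) *ᵥ m) :=
    hF_meas.comp (continuous_const.matrix_mulVec continuous_id).measurable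
  have hdens_eq : (fun m : Fin n → ℝ => ENNReal.ofReal
      ((jac Sinv ((Ψᵀ * C⁻¹) *ᵥ m)).det *
        Real.exp ((1/2) * (((Ψᵀ * C⁻¹) *ᵥ m) ⬝ᵥ ((Ψᵀ * C⁻¹) *ᵥ m))
          - (1/2) * (Sinv ((Ψᵀ * C⁻¹) *ᵥ m) ⬝ᵥ Sinv ((Ψᵀ * C⁻¹) *ᵥ m)))))
      = fun m => F ((Ψᵀ * C⁻¹) *ᵥ m) := rfl
  rw [hdens_eq] at hmain
  have hrn : (((gaussianOf 0 C).map (lazyMap C Ψ S)).rnDeriv (gaussianOf 0 C))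
      =ᵐ[gaussianOf 0 C] fun m => F ((Ψᵀ * C⁻¹) *ᵥ m) := by
    rw [hmain]
    exact Measure.rnDeriv_withDensity _ hdens_meas
  refine ⟨?_, ?_, ?_⟩
  · rw [hmain]; exact withDensity_absolutelyContinuous _ _
  · filter_upwards [hrn] with m hm
    rw [hm]
    exact ENNReal.toReal_ofReal (mul_nonneg (hjpos _).le (Real.exp_pos _).le)
  · -- the std gaussian statement
    have hmain_r := main_map (1 : Matrix (Fin r) (Fin r) ℝ) Matrix.PosDef.one 1
      (by simp) S Sinv hS hSinv hli hri hdet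
    rw [lazyMap_one] at hmain_r
    have hdr : (fun m : Fin r → ℝ => ENNReal.ofReal
        ((jac Sinv (((1 : Matrix (Fin r) (Fin r) ℝ)ᵀ * (1 : Matrix (Fin r) (Fin r) ℝ)⁻¹) *ᵥ m)).det *
          Real.exp ((1/2) * (((((1 : Matrix (Fin r) (Fin r) ℝ)ᵀ * (1 : Matrix (Fin r) (Fin r) ℝ)⁻¹)) *ᵥ m) ⬝ᵥ ((((1 : Matrix (Fin r) (Fin r) ℝ)ᵀ * (1 : Matrix (Fin r) (Fin r) ℝ)⁻¹)) *ᵥ m))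
            - (1/2) * (Sinv ((((1 : Matrix (Fin r) (Fin r) ℝ)ᵀ * (1 : Matrix (Fin r) (Fin r) ℝ)⁻¹)) *ᵥ m) ⬝ᵥ Sinv ((((1 : Matrix (Fin r) (Fin r) ℝ)ᵀ * (1 : Matrix (Fin r) (Fin r) ℝ)⁻¹)) *ᵥ m)))))
        = F := by
      funext z
      simp only [Matrix.transpose_one, inv_one, Matrix.mul_one, Matrix.one_mulVec, hF]
    rw [hdr] at hmain_r
    have hrn_r : (((stdGaussian r).map S).rnDeriv (stdGaussian r)) =ᵐ[stdGaussian r] F := by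
      show (((gaussianOf 0 1).map S).rnDeriv (gaussianOf 0 1)) =ᵐ[gaussianOf 0 1] F
      rw [hmain_r]
      exact Measure.rnDeriv_withDensity _ hF_meas
    -- transfer the a.e. statement through E
    set R : (Fin r → ℝ) → ℝ≥0∞ := ((stdGaussian r).map S).rnDeriv (stdGaussian r) with hR
    have hR_meas : Measurable R := Measure.measurable_rnDeriv _ _
    set N : Set (Fin r → ℝ) := {z | R z = F z}ᶜ with hN
    have hN_meas : MeasurableSet N := by
      rw [hN]
      refine MeasurableSet.compl ?_
      have heq : {z | R z = F z} = {z | R z ≤ F z} ∩ {z | F z ≤ R z} := by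
        ext z; simp [le_antisymm_iff]
      rw [heq]
      exact (measurableSet_le hR_meas hF_meas).inter (measurableSet_le hF_meas hR_meas)
    have hπN : stdGaussian r N = 0 := by
      rw [hN, Set.compl_setOf]
      exact ae_iff.mp hrn_r
    have hvolN : volume N = 0 := by
      set ρ1 : (Fin r → ℝ) → ℝ≥0∞ := fun z =>
        ENNReal.ofReal (((2 * π) ^ r * (1 : Matrix (Fin r) (Fin r) ℝ).det) ^ (-(1 : ℝ) / 2) *
          Real.exp (-(1 / 2) * ((z - 0) ⬝ᵥ (1 : Matrix (Fin r) (Fin r) ℝ)⁻¹ *ᵥ (z - 0)))) with hρ1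
      have hρ1_meas : Measurable ρ1 := by
        refine (ENNReal.continuous_ofReal.comp ?_).measurable
        refine continuous_const.mul (Real.continuous_exp.comp (continuous_const.mul ?_))
        exact (continuous_id.sub continuous_const).dotProduct
          (continuous_const.matrix_mulVec (continuous_id.sub continuous_const))
      have hρ1_pos : ∀ z, ρ1 z ≠ 0 := by
        intro z
        have hbase : (0:ℝ) < (2 * π) ^ r * (1 : Matrix (Fin r) (Fin r) ℝ).det := by
          rw [Matrix.det_one, mul_one]
          positivity
        have hc1 : (0:ℝ) < ((2 * π) ^ r * (1 : Matrix (Fin r) (Fin r) ℝ).det) ^ (-(1:ℝ) / 2) :=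
          Real.rpow_pos_of_pos hbase _
        exact (ENNReal.ofReal_pos.mpr (mul_pos hc1 (Real.exp_pos _))).ne'
      have hgr : stdGaussian r = volume.withDensity ρ1 := rfl
      have h0 : ∫⁻ z in N, ρ1 z = 0 := by
        rw [← withDensity_apply ρ1 hN_meas, ← hgr]
        exact hπN
      rw [setLIntegral_eq_zero_iff hN_meas hρ1_meas] at h0
      have hsub : N ⊆ {z | ¬ (z ∈ N → ρ1 z = 0)} := by
        intro z hz
        simp only [Set.mem_setOf_eq, Classical.not_imp]
        exact ⟨hz, hρ1_pos z⟩
      exact measure_mono_null hsub (ae_iff.mp h0)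
    -- pull back through E
    have hEΨ : (Ψᵀ * C⁻¹) * Ψ = 1 := hΨ
    have hpre : volume {m : Fin n → ℝ | (Ψᵀ * C⁻¹) *ᵥ m ∈ N} = 0 :=
      preimage_mulVec_null (Ψᵀ * C⁻¹) Ψ hEΨ hN_meas hvolN
    have hgauss_pre : (gaussianOf 0 C) {m : Fin n → ℝ | (Ψᵀ * C⁻¹) *ᵥ m ∈ N} = 0 := by
      have habs : gaussianOf 0 C ≪ volume := withDensity_absolutelyContinuous _ _
      exact habs hpre
    have hae : ∀ᵐ m ∂(gaussianOf 0 C), ¬ ((Ψᵀ * C⁻¹) *ᵥ m ∈ N) := by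
      rw [ae_iff]
      simpa using hgauss_pre
    filter_upwards [hrn, hae] with m hm hmN
    rw [hm]
    have hRF : R ((Ψᵀ * C⁻¹) *ᵥ m) = F ((Ψᵀ * C⁻¹) *ᵥ m) := by
      by_contra hne
      exact hmN (by rw [hN]; exact hne)
    exact hRF.symm
end
end
end
end
end
end

section
/- Consider the Gaussian prior, projection, and data-space whitening setting. Let G : ℝⁿ → ℝ^d and g : ℝʳ → ℝ^d be Borel measurable. Then ∫ ‖Γ^{-1/2} ( G(m) − V g(Em) )‖² dμ(m) = ∫_{ℝʳ} ∫ ‖ Vᵀ Γ⁻¹ G(Ψz + m⊥) − g(z) ‖² dμ⊥(m⊥) dπ(z), where both sides may be infinite. -/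
open MeasureTheory Matrix Real

noncomputable section

lemma measurable_mulVec' {a b : ℕ} (A : Matrix (Fin a) (Fin b) ℝ) :
    Measurable fun v : Fin b → ℝ => A *ᵥ v := by
  apply measurable_pi_lambda
  intro i
  simpa [Matrix.mulVec, dotProduct] using
    Finset.measurable_sum Finset.univ fun j _ => by fun_prop

lemma measurable_dotProduct_self {α : Type*} [MeasurableSpace α] {k : ℕ}
    {v : α → Fin k → ℝ} (hv : Measurable v) :
    Measurable fun x => v x ⬝ᵥ v x := by
  simp only [dotProduct]
  exact Finset.measurable_sum _ fun i _ =>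
    ((measurable_pi_apply i).comp hv).mul ((measurable_pi_apply i).comp hv)

lemma measurable_quad {k : ℕ} (A : Matrix (Fin k) (Fin k) ℝ) :
    Measurable fun v : Fin k → ℝ => v ⬝ᵥ A *ᵥ v := by
  simp only [dotProduct]
  exact Finset.measurable_sum _ fun i _ =>
    (measurable_pi_apply i).mul ((measurable_pi_apply i).comp (measurable_mulVec' A))

lemma dot_mulVec_eq {a b : ℕ} (A : Matrix (Fin a) (Fin b) ℝ) (x : Fin a → ℝ) (y : Fin b → ℝ) :
    x ⬝ᵥ A *ᵥ y = (Aᵀ *ᵥ x) ⬝ᵥ y := by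
  rw [Matrix.dotProduct_mulVec, ← Matrix.mulVec_transpose]

lemma mulVec_dot_eq {a b : ℕ} (A : Matrix (Fin a) (Fin b) ℝ) (x : Fin b → ℝ) (y : Fin a → ℝ) :
    (A *ᵥ x) ⬝ᵥ y = x ⬝ᵥ (Aᵀ *ᵥ y) := by
  rw [dotProduct_comm, dot_mulVec_eq, dotProduct_comm]

section MatrixAlg
variable {n r : ℕ} (C : Matrix (Fin n) (Fin n) ℝ) (Ψ : Matrix (Fin n) (Fin r) ℝ)

lemma hCinvSym (hC : C.PosDef) : C⁻¹ᵀ = C⁻¹ := by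
  have hCs : Cᵀ = C := by simpa using hC.isHermitian.eq
  rw [Matrix.transpose_nonsing_inv, hCs]

lemma hQpsi (hΨ : Ψᵀ * C⁻¹ * Ψ = 1) : (1 - Ψ * (Ψᵀ * C⁻¹)) * Ψ = 0 := by
  rw [Matrix.sub_mul, Matrix.one_mul, Matrix.mul_assoc, hΨ, Matrix.mul_one, sub_self]

lemma hEQ (hΨ : Ψᵀ * C⁻¹ * Ψ = 1) :
    (Ψᵀ * C⁻¹) * (1 - Ψ * (Ψᵀ * C⁻¹)) = 0 := by
  rw [Matrix.mul_sub, Matrix.mul_one, ← Matrix.mul_assoc, hΨ, Matrix.one_mul, sub_self]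

lemma decompM (hΨ : Ψᵀ * C⁻¹ * Ψ = 1) (m : Fin n → ℝ) :
    (1 - Ψ * (Ψᵀ * C⁻¹)) *ᵥ m + Ψ *ᵥ ((Ψᵀ * C⁻¹) *ᵥ m) = m := by
  rw [Matrix.mulVec_mulVec, Matrix.sub_mulVec, Matrix.one_mulVec]
  abel

lemma quadA1 (hC : C.PosDef) (hΨ : Ψᵀ * C⁻¹ * Ψ = 1) (z : Fin r → ℝ) (m : Fin n → ℝ) :
    ((1 - Ψ * (Ψᵀ * C⁻¹)) *ᵥ m + Ψ *ᵥ z) ⬝ᵥ C⁻¹ *ᵥ ((1 - Ψ * (Ψᵀ * C⁻¹)) *ᵥ m + Ψ *ᵥ z)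
      = z ⬝ᵥ z + ((1 - Ψ * (Ψᵀ * C⁻¹)) *ᵥ m) ⬝ᵥ C⁻¹ *ᵥ ((1 - Ψ * (Ψᵀ * C⁻¹)) *ᵥ m) := by
  set Q := 1 - Ψ * (Ψᵀ * C⁻¹) with hQ
  have hEQ' : Ψᵀ * C⁻¹ * Q = 0 := by rw [hQ]; exact hEQ C Ψ hΨ
  have cross1 : (Ψ *ᵥ z) ⬝ᵥ C⁻¹ *ᵥ (Q *ᵥ m) = 0 := by
    rw [mulVec_dot_eq, Matrix.mulVec_mulVec, Matrix.mulVec_mulVec,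
      hEQ', Matrix.zero_mulVec, dotProduct_zero]
  have cross2 : (Q *ᵥ m) ⬝ᵥ C⁻¹ *ᵥ (Ψ *ᵥ z) = 0 := by
    rw [mulVec_dot_eq, Matrix.mulVec_mulVec, Matrix.mulVec_mulVec]
    have h2 : Qᵀ * (C⁻¹ * Ψ) = 0 := by
      have h1 : C⁻¹ * Ψ = (Ψᵀ * C⁻¹)ᵀ := by
        rw [Matrix.transpose_mul, Matrix.transpose_transpose, hCinvSym C hC]
      rw [h1, ← Matrix.transpose_mul, hEQ', Matrix.transpose_zero]
    rw [Matrix.mul_assoc, h2, Matrix.zero_mulVec, dotProduct_zero]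
  have main : (Ψ *ᵥ z) ⬝ᵥ C⁻¹ *ᵥ (Ψ *ᵥ z) = z ⬝ᵥ z := by
    rw [mulVec_dot_eq, Matrix.mulVec_mulVec, Matrix.mulVec_mulVec,
      hΨ, Matrix.one_mulVec]
  rw [Matrix.mulVec_add, add_dotProduct, dotProduct_add,
    dotProduct_add]
  rw [cross1, cross2, main]; ring

lemma quadA2 (hC : C.PosDef) (hΨ : Ψᵀ * C⁻¹ * Ψ = 1) (m : Fin n → ℝ) :
    m ⬝ᵥ C⁻¹ *ᵥ m
      = ((Ψᵀ * C⁻¹) *ᵥ m) ⬝ᵥ ((Ψᵀ * C⁻¹) *ᵥ m)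
        + ((1 - Ψ * (Ψᵀ * C⁻¹)) *ᵥ m) ⬝ᵥ C⁻¹ *ᵥ ((1 - Ψ * (Ψᵀ * C⁻¹)) *ᵥ m) := by
  conv_lhs => rw [← decompM C Ψ hΨ m]
  exact quadA1 C Ψ hC hΨ ((Ψᵀ * C⁻¹) *ᵥ m) m

lemma quadV {d : ℕ} (Γ V : Matrix (Fin d) (Fin d) ℝ) (hΓ : Γ.PosDef)
    (hVinv : IsUnit V.det) (hV : Vᵀ * Γ⁻¹ * V = 1) (u w : Fin d → ℝ) :
    (u - V *ᵥ w) ⬝ᵥ Γ⁻¹ *ᵥ (u - V *ᵥ w)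
      = ((Vᵀ * Γ⁻¹) *ᵥ u - w) ⬝ᵥ ((Vᵀ * Γ⁻¹) *ᵥ u - w) := by
  have hVi : V⁻¹ = Vᵀ * Γ⁻¹ := Matrix.inv_eq_left_inv hV
  have h1 : (Vᵀ * Γ⁻¹) *ᵥ u - w = (Vᵀ * Γ⁻¹) *ᵥ (u - V *ᵥ w) := by
    rw [Matrix.mulVec_sub, Matrix.mulVec_mulVec, hV, Matrix.one_mulVec]
  have hWW : (Vᵀ * Γ⁻¹)ᵀ * (Vᵀ * Γ⁻¹) = Γ⁻¹ := by
    rw [Matrix.transpose_mul, Matrix.transpose_transpose, hCinvSym Γ hΓ,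
      Matrix.mul_assoc, ← hVi, Matrix.mul_nonsing_inv V hVinv, Matrix.mul_one]
  rw [h1, mulVec_dot_eq, Matrix.mulVec_mulVec, hWW]

end MatrixAlg


lemma stdGaussian_norm (r : ℕ) :
    ∫⁻ z : Fin r → ℝ, ENNReal.ofReal (((2 * π) ^ r : ℝ) ^ (-(1:ℝ)/2) *
      Real.exp (-(1/2) * (z ⬝ᵥ z))) ∂volume = 1 := by
  have h2π : (0:ℝ) < 2 * π := by positivity
  have hs : (0:ℝ) < Real.sqrt (2 * π) := Real.sqrt_pos.mpr h2π
  set c : ℝ := ((2 * π) ^ r : ℝ) ^ (-(1:ℝ)/2) with hc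
  have hcnn : 0 ≤ c := Real.rpow_nonneg (by positivity) _
  have heq : ∀ z : Fin r → ℝ,
      Real.exp (-(1/2) * (z ⬝ᵥ z)) = ∏ i, Real.exp (-(1/2) * (z i)^2) := by
    intro z
    rw [← Real.exp_sum]
    congr 1
    simp [dotProduct, Finset.mul_sum, sq]
  have hint : Integrable (fun z : Fin r → ℝ => ∏ i, Real.exp (-(1/2) * (z i)^2)) := by
    exact Integrable.fintype_prod (f := fun (_ : Fin r) (x : ℝ) => Real.exp (-(1/2) * x^2))
      fun _ => integrable_exp_neg_mul_sq (by norm_num)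
  have hI : ∫ z : Fin r → ℝ, ∏ i, Real.exp (-(1/2) * (z i)^2)
      = Real.sqrt (2 * π) ^ r := by
    rw [volume_pi, integral_fintype_prod_eq_pow (ι := Fin r) (fun x : ℝ => Real.exp (-(1/2) * x^2))]
    rw [show ∫ x : ℝ, Real.exp (-(1/2) * x^2) = Real.sqrt (π / (1/2)) from
      integral_gaussian (1/2)]
    norm_num [Fintype.card_fin]
    ring
  have hmul : c * Real.sqrt (2 * π) ^ r = 1 := by
    have h1 : ((2 * π) ^ r : ℝ) = Real.sqrt (2 * π) ^ (2 * r) := by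
      rw [pow_mul, Real.sq_sqrt h2π.le]
    rw [hc, h1, ← Real.rpow_natCast (Real.sqrt (2 * π)) (2 * r), ← Real.rpow_mul hs.le,
      ← Real.rpow_natCast (Real.sqrt (2 * π)) r, ← Real.rpow_add hs]
    have h0 : ((2 * r : ℕ) : ℝ) * (-(1:ℝ)/2) + (r:ℝ) = 0 := by push_cast; ring
    rw [h0, Real.rpow_zero]
  calc ∫⁻ z : Fin r → ℝ, ENNReal.ofReal (c * Real.exp (-(1/2) * (z ⬝ᵥ z))) ∂volume
      = ∫⁻ z : Fin r → ℝ, ENNReal.ofReal c *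
          ENNReal.ofReal (∏ i, Real.exp (-(1/2) * (z i)^2)) ∂volume := by
        refine lintegral_congr fun z => ?_
        rw [heq z, ENNReal.ofReal_mul hcnn]
    _ = ENNReal.ofReal c *
          ∫⁻ z : Fin r → ℝ, ENNReal.ofReal (∏ i, Real.exp (-(1/2) * (z i)^2)) ∂volume :=
        lintegral_const_mul' _ _ ENNReal.ofReal_ne_top
    _ = ENNReal.ofReal c * ENNReal.ofReal (Real.sqrt (2 * π) ^ r) := by
        rw [← ofReal_integral_eq_lintegral_ofReal hint
          (Filter.Eventually.of_forall fun z =>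
            Finset.prod_nonneg fun i _ => (Real.exp_pos _).le), hI]
    _ = 1 := by
        rw [← ENNReal.ofReal_mul hcnn, hmul, ENNReal.ofReal_one]

lemma key_swap {n r : ℕ} (C : Matrix (Fin n) (Fin n) ℝ) (hC : C.PosDef)
    (Ψ : Matrix (Fin n) (Fin r) ℝ) (hΨ : Ψᵀ * C⁻¹ * Ψ = 1)
    (E : Matrix (Fin r) (Fin n) ℝ) (Q : Matrix (Fin n) (Fin n) ℝ)
    (hE : E = Ψᵀ * C⁻¹) (hQ : Q = 1 - Ψ * (Ψᵀ * C⁻¹))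
    (f : (Fin r → ℝ) → (Fin n → ℝ) → ENNReal) (hf : Measurable (Function.uncurry f)) :
    ∫⁻ m, f (E *ᵥ m) (Q *ᵥ m) ∂(gaussianOf 0 C)
      = ∫⁻ z, ∫⁻ mp, f z mp ∂(compPrior C Ψ) ∂(stdGaussian r) := by
  -- real densities
  set ρr : (Fin n → ℝ) → ℝ := fun m =>
    ((2 * π) ^ n * C.det) ^ (-(1 : ℝ) / 2) * Real.exp (-(1 / 2) * (m ⬝ᵥ C⁻¹ *ᵥ m)) with hρrdef
  set φr : (Fin r → ℝ) → ℝ := fun z =>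
    ((2 * π) ^ r : ℝ) ^ (-(1 : ℝ) / 2) * Real.exp (-(1 / 2) * (z ⬝ᵥ z)) with hφrdef
  have hφnn : ∀ z, 0 ≤ φr z := fun z =>
    mul_nonneg (Real.rpow_nonneg (by positivity) _) (Real.exp_pos _).le
  have hρnn : ∀ m, 0 ≤ ρr m := fun m =>
    mul_nonneg (Real.rpow_nonneg (mul_nonneg (by positivity) hC.det_pos.le) _) (Real.exp_pos _).le
  -- measure identifications
  have hgC : gaussianOf 0 C = volume.withDensity fun m => ENNReal.ofReal (ρr m) := by
    unfold gaussianOf; congr 1; funext m; rw [sub_zero]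
  have hgS : stdGaussian r = volume.withDensity fun z => ENNReal.ofReal (φr z) := by
    unfold stdGaussian gaussianOf
    congr 1; funext z
    simp [Matrix.det_one, inv_one, Matrix.one_mulVec, sub_zero, hφrdef]
  -- measurability
  have hρm : Measurable fun m => ENNReal.ofReal (ρr m) :=
    ENNReal.measurable_ofReal.comp
      ((Real.measurable_exp.comp ((measurable_quad C⁻¹).const_mul (-(1/2)))).const_mul _)
  have hzz : Measurable fun z : Fin r → ℝ => z ⬝ᵥ z := measurable_dotProduct_self measurable_id
  have hφm : Measurable fun z => ENNReal.ofReal (φr z) :=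
    ENNReal.measurable_ofReal.comp
      ((Real.measurable_exp.comp (hzz.const_mul (-(1/2)))).const_mul _)
  have hEm : Measurable fun m : Fin n → ℝ => E *ᵥ m := measurable_mulVec' E
  have hQm : Measurable fun m : Fin n → ℝ => Q *ᵥ m := measurable_mulVec' Q
  have hΨm : Measurable fun z : Fin r → ℝ => Ψ *ᵥ z := measurable_mulVec' Ψ
  -- algebraic rewrites
  have hEΨ : E * Ψ = 1 := by rw [hE]; exact hΨ
  have hQΨ : Q * Ψ = 0 := by rw [hQ]; exact hQpsi C Ψ hΨ
  have hr1 : ∀ (m : Fin n → ℝ) (z : Fin r → ℝ), E *ᵥ (m + Ψ *ᵥ z) = E *ᵥ m + z := by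
    intro m z
    rw [Matrix.mulVec_add, Matrix.mulVec_mulVec, hEΨ, Matrix.one_mulVec]
  have hr2 : ∀ (m : Fin n → ℝ) (z : Fin r → ℝ), Q *ᵥ (m + Ψ *ᵥ z) = Q *ᵥ m := by
    intro m z
    rw [Matrix.mulVec_add, Matrix.mulVec_mulVec, hQΨ, Matrix.zero_mulVec, add_zero]
  have hQid : ∀ m : Fin n → ℝ, m - (Ψ * (Ψᵀ * C⁻¹)) *ᵥ m = Q *ᵥ m := by
    intro m
    rw [hQ, Matrix.sub_mulVec, Matrix.one_mulVec]
  have hr3 : ∀ (m : Fin n → ℝ) (z : Fin r → ℝ),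
      m + Ψ *ᵥ (z - E *ᵥ m) = Q *ᵥ m + Ψ *ᵥ z := by
    intro m z
    rw [Matrix.mulVec_sub, Matrix.mulVec_mulVec, ← hQid m, hE]
    abel
  have hA1 : ∀ (z : Fin r → ℝ) (m : Fin n → ℝ),
      (Q *ᵥ m + Ψ *ᵥ z) ⬝ᵥ C⁻¹ *ᵥ (Q *ᵥ m + Ψ *ᵥ z)
        = z ⬝ᵥ z + (Q *ᵥ m) ⬝ᵥ C⁻¹ *ᵥ (Q *ᵥ m) := by
    intro z m; rw [hQ]; exact quadA1 C Ψ hC hΨ z m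
  have hA2 : ∀ m : Fin n → ℝ,
      m ⬝ᵥ C⁻¹ *ᵥ m = (E *ᵥ m) ⬝ᵥ (E *ᵥ m) + (Q *ᵥ m) ⬝ᵥ C⁻¹ *ᵥ (Q *ᵥ m) := by
    intro m; rw [hE, hQ]; exact quadA2 C Ψ hC hΨ m
  -- density exchange identity
  have hdens : ∀ (z : Fin r → ℝ) (m : Fin n → ℝ),
      φr (-(E *ᵥ m)) * ρr (Q *ᵥ m + Ψ *ᵥ z) = φr z * ρr m := by
    intro z m
    simp only [hρrdef, hφrdef]
    rw [neg_dotProduct, dotProduct_neg, neg_neg, hA1 z m, hA2 m]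
    simp only [mul_add, Real.exp_add]
    ring
  -- Gaussian normalization
  have hN : ∫⁻ z, ENNReal.ofReal (φr z) ∂volume = 1 := stdGaussian_norm r
  -- measurable compositions
  have hfEQ : Measurable fun m => f (E *ᵥ m) (Q *ᵥ m) :=
    hf.comp (hEm.prodMk hQm)
  calc
    ∫⁻ m, f (E *ᵥ m) (Q *ᵥ m) ∂(gaussianOf 0 C)
        = ∫⁻ m, ENNReal.ofReal (ρr m) * f (E *ᵥ m) (Q *ᵥ m) ∂volume := by
          rw [hgC]
          exact lintegral_withDensity_eq_lintegral_mul volume hρm hfEQ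
    _ = ∫⁻ m, ∫⁻ z, ENNReal.ofReal (φr z) *
          (ENNReal.ofReal (ρr m) * f (E *ᵥ m) (Q *ᵥ m)) ∂volume ∂volume := by
          refine lintegral_congr fun m => ?_
          rw [lintegral_mul_const _ hφm, hN, one_mul]
    _ = ∫⁻ z, ∫⁻ m, ENNReal.ofReal (φr z) *
          (ENNReal.ofReal (ρr m) * f (E *ᵥ m) (Q *ᵥ m)) ∂volume ∂volume := by
          refine lintegral_lintegral_swap ?_
          exact ((hφm.comp measurable_snd).mul ((hρm.comp measurable_fst).mul
            (hf.comp ((hEm.comp measurable_fst).prodMk (hQm.comp measurable_fst))))).aemeasurable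
    _ = ∫⁻ z, ∫⁻ m, ENNReal.ofReal (φr z) *
          (ENNReal.ofReal (ρr (m + Ψ *ᵥ z)) * f (E *ᵥ m + z) (Q *ᵥ m)) ∂volume ∂volume := by
          refine lintegral_congr fun z => ?_
          rw [← lintegral_add_right_eq_self
            (fun m => ENNReal.ofReal (φr z) *
              (ENNReal.ofReal (ρr m) * f (E *ᵥ m) (Q *ᵥ m))) (Ψ *ᵥ z)]
          refine lintegral_congr fun m => ?_
          rw [hr1 m z, hr2 m z]
    _ = ∫⁻ m, ∫⁻ z, ENNReal.ofReal (φr z) *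
          (ENNReal.ofReal (ρr (m + Ψ *ᵥ z)) * f (E *ᵥ m + z) (Q *ᵥ m)) ∂volume ∂volume := by
          refine lintegral_lintegral_swap ?_
          refine ((hφm.comp measurable_fst).mul (?_)).aemeasurable
          refine (hρm.comp (measurable_snd.add (hΨm.comp measurable_fst))).mul ?_
          exact hf.comp (((hEm.comp measurable_snd).add measurable_fst).prodMk
            (hQm.comp measurable_snd))
    _ = ∫⁻ m, ∫⁻ z, ENNReal.ofReal (φr (z - E *ᵥ m)) *
          (ENNReal.ofReal (ρr (Q *ᵥ m + Ψ *ᵥ z)) * f z (Q *ᵥ m)) ∂volume ∂volume := by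
          refine lintegral_congr fun m => ?_
          rw [← lintegral_add_right_eq_self
            (fun z => ENNReal.ofReal (φr z) *
              (ENNReal.ofReal (ρr (m + Ψ *ᵥ z)) * f (E *ᵥ m + z) (Q *ᵥ m))) (-(E *ᵥ m))]
          refine lintegral_congr fun z => ?_
          rw [← sub_eq_add_neg, hr3 m z, add_sub_cancel]
    _ = ∫⁻ z, ∫⁻ m, ENNReal.ofReal (φr (z - E *ᵥ m)) *
          (ENNReal.ofReal (ρr (Q *ᵥ m + Ψ *ᵥ z)) * f z (Q *ᵥ m)) ∂volume ∂volume := by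
          refine lintegral_lintegral_swap ?_
          refine ((hφm.comp (measurable_snd.sub (hEm.comp measurable_fst))).mul ?_).aemeasurable
          refine (hρm.comp ((hQm.comp measurable_fst).add (hΨm.comp measurable_snd))).mul ?_
          exact hf.comp (measurable_snd.prodMk (hQm.comp measurable_fst))
    _ = ∫⁻ z, ∫⁻ m, ENNReal.ofReal (φr (-(E *ᵥ m))) *
          (ENNReal.ofReal (ρr (Q *ᵥ m + Ψ *ᵥ z)) * f z (Q *ᵥ m)) ∂volume ∂volume := by
          refine lintegral_congr fun z => ?_
          rw [← lintegral_add_right_eq_self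
            (fun m => ENNReal.ofReal (φr (z - E *ᵥ m)) *
              (ENNReal.ofReal (ρr (Q *ᵥ m + Ψ *ᵥ z)) * f z (Q *ᵥ m))) (Ψ *ᵥ z)]
          refine lintegral_congr fun m => ?_
          rw [hr1 m z, hr2 m z, show z - (E *ᵥ m + z) = -(E *ᵥ m) by abel]
    _ = ∫⁻ z, ∫⁻ m, ENNReal.ofReal (φr z) *
          (ENNReal.ofReal (ρr m) * f z (Q *ᵥ m)) ∂volume ∂volume := by
          refine lintegral_congr fun z => lintegral_congr fun m => ?_
          rw [← mul_assoc, ← ENNReal.ofReal_mul (hφnn _), hdens z m,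
            ENNReal.ofReal_mul (hφnn _), mul_assoc]
    _ = ∫⁻ z, ENNReal.ofReal (φr z) *
          ∫⁻ m, ENNReal.ofReal (ρr m) * f z (Q *ᵥ m) ∂volume ∂volume := by
          refine lintegral_congr fun z => ?_
          exact lintegral_const_mul' _ _ ENNReal.ofReal_ne_top
    _ = ∫⁻ z, (∫⁻ m, ENNReal.ofReal (ρr m) * f z (Q *ᵥ m) ∂volume) ∂(stdGaussian r) := by
          rw [hgS]
          refine (lintegral_withDensity_eq_lintegral_mul volume hφm ?_).symm
          exact Measurable.lintegral_prod_right
            ((hρm.comp measurable_snd).mul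
              (hf.comp (measurable_fst.prodMk (hQm.comp measurable_snd))))
    _ = ∫⁻ z, ∫⁻ mp, f z mp ∂(compPrior C Ψ) ∂(stdGaussian r) := by
          refine lintegral_congr fun z => ?_
          have hfz : Measurable (f z) := hf.of_uncurry_left
          have hT : Measurable fun m : Fin n → ℝ => m - (Ψ * (Ψᵀ * C⁻¹)) *ᵥ m :=
            measurable_id.sub (measurable_mulVec' _)
          unfold compPrior
          have hwd := lintegral_withDensity_eq_lintegral_mul volume hρm
            (g := fun a => f z (a - (Ψ * (Ψᵀ * C⁻¹)) *ᵥ a)) (hfz.comp hT)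
          rw [lintegral_map hfz hT, hgC, hwd]
          refine lintegral_congr fun m => ?_
          simp only [Pi.mul_apply]
          rw [hQid m]


/-- equivalence of the `L²_μ` operator learning objective and its
latent representation:
`∫ ‖Γ^{-1/2}(G(m) − V g(Em))‖² dμ(m)
  = ∫∫ ‖VᵀΓ⁻¹G(Ψz + m⊥) − g(z)‖² dμ⊥(m⊥) dπ(z)`, both sides possibly infinite. -/
theorem L2_learning_latent_representation
    {n r d : ℕ} (C : Matrix (Fin n) (Fin n) ℝ) (hC : C.PosDef)
    (Γ : Matrix (Fin d) (Fin d) ℝ) (hΓ : Γ.PosDef)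
    (Ψ : Matrix (Fin n) (Fin r) ℝ) (hΨ : Ψᵀ * C⁻¹ * Ψ = 1)
    (V : Matrix (Fin d) (Fin d) ℝ) (hVinv : IsUnit V.det) (hV : Vᵀ * Γ⁻¹ * V = 1)
    (G : (Fin n → ℝ) → (Fin d → ℝ)) (hG : Measurable G)
    (g : (Fin r → ℝ) → (Fin d → ℝ)) (hg : Measurable g) :
    (∫⁻ m, ENNReal.ofReal ((G m - V *ᵥ g ((Ψᵀ * C⁻¹) *ᵥ m)) ⬝ᵥ
        Γ⁻¹ *ᵥ (G m - V *ᵥ g ((Ψᵀ * C⁻¹) *ᵥ m))) ∂(gaussianOf 0 C)) =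
      ∫⁻ z, ∫⁻ mp, ENNReal.ofReal
          (((Vᵀ * Γ⁻¹) *ᵥ G (Ψ *ᵥ z + mp) - g z) ⬝ᵥ
            ((Vᵀ * Γ⁻¹) *ᵥ G (Ψ *ᵥ z + mp) - g z))
        ∂(compPrior C Ψ) ∂(stdGaussian r) := by
  set F : (Fin r → ℝ) → (Fin n → ℝ) → ENNReal := fun z p =>
    ENNReal.ofReal (((Vᵀ * Γ⁻¹) *ᵥ G (Ψ *ᵥ z + p) - g z) ⬝ᵥ
      ((Vᵀ * Γ⁻¹) *ᵥ G (Ψ *ᵥ z + p) - g z)) with hFdef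
  have hv : Measurable fun p : (Fin r → ℝ) × (Fin n → ℝ) =>
      (Vᵀ * Γ⁻¹) *ᵥ G (Ψ *ᵥ p.1 + p.2) - g p.1 :=
    ((measurable_mulVec' (Vᵀ * Γ⁻¹)).comp
      (hG.comp (((measurable_mulVec' Ψ).comp measurable_fst).add measurable_snd))).sub
      (hg.comp measurable_fst)
  have hF : Measurable (Function.uncurry F) :=
    ENNReal.measurable_ofReal.comp (measurable_dotProduct_self hv)
  have hkey := key_swap C hC Ψ hΨ (Ψᵀ * C⁻¹) (1 - Ψ * (Ψᵀ * C⁻¹)) rfl rfl F hF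
  refine Eq.trans ?_ hkey
  refine lintegral_congr fun m => ?_
  rw [quadV Γ V hΓ hVinv hV (G m) (g ((Ψᵀ * C⁻¹) *ᵥ m)), hFdef]
  have hm : Ψ *ᵥ ((Ψᵀ * C⁻¹) *ᵥ m) + (1 - Ψ * (Ψᵀ * C⁻¹)) *ᵥ m = m := by
    rw [add_comm]; exact decompM C Ψ hΨ m
  simp only [hm]
end
end

section
/- Let C ∈ ℝ^{n×n} be symmetric positive definite, m₀ ∈ ℝⁿ, and let D ∈ ℝ^{n×k} satisfy DᵀC⁻¹D = I_k; set E := DᵀC⁻¹ ∈ ℝ^{k×n}. Let λ₁, …, λ_k ≥ 0 and Λ := diag(λ₁, …, λ_k). Then the matrix C⁻¹ + C⁻¹ D Λ E is symmetric positive definite; denote its inverse by C_LA. The Gaussian measure μ_LA = N(m₀, C_LA) is absolutely continuous with respect to μ = N(0, C), with density dμ_LA/dμ(m) = exp( − ½ m₀ᵀ C⁻¹ m₀ − ½ (E m₀)ᵀ Λ (E m₀) + (E m₀)ᵀ Λ (E m) + m₀ᵀ C⁻¹ m + ½ Σ_{j=1}^{k} log(1 + λⱼ) − ½ (E m)ᵀ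 Λ (E m) ) for Lebesgue-a.e. m. -/
open MeasureTheory Matrix Real

noncomputable section

/-- The Laplace-approximation precision matrix `C_LA⁻¹ = C⁻¹ + C⁻¹DΛE`,
with `E = DᵀC⁻¹` and `Λ = diag(λ)`. -/
def laPrecision {n k : ℕ} (C : Matrix (Fin n) (Fin n) ℝ)
    (D : Matrix (Fin n) (Fin k) ℝ) (lam : Fin k → ℝ) : Matrix (Fin n) (Fin n) ℝ :=
  C⁻¹ + C⁻¹ * D * Matrix.diagonal lam * (Dᵀ * C⁻¹)

private lemma symm_quad_expand {n : ℕ} (A : Matrix (Fin n) (Fin n) ℝ) (hA : Aᵀ = A)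
    (x y : Fin n → ℝ) :
    (x - y) ⬝ᵥ A *ᵥ (x - y) = x ⬝ᵥ A *ᵥ x - 2 * (y ⬝ᵥ A *ᵥ x) + y ⬝ᵥ A *ᵥ y := by
  have h : x ⬝ᵥ A *ᵥ y = y ⬝ᵥ A *ᵥ x := by
    rw [dotProduct_mulVec, ← mulVec_transpose, hA, dotProduct_comm]
  rw [sub_dotProduct, mulVec_sub, dotProduct_sub, dotProduct_sub, h]
  ring

private lemma symm_quad_expand' {k : ℕ} (A : Matrix (Fin k) (Fin k) ℝ) (hA : Aᵀ = A)
    (x y : Fin k → ℝ) :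
    (x - y) ⬝ᵥ A *ᵥ (x - y) = x ⬝ᵥ A *ᵥ x - 2 * (y ⬝ᵥ A *ᵥ x) + y ⬝ᵥ A *ᵥ y := by
  have h : x ⬝ᵥ A *ᵥ y = y ⬝ᵥ A *ᵥ x := by
    rw [dotProduct_mulVec, ← mulVec_transpose, hA, dotProduct_comm]
  rw [sub_dotProduct, mulVec_sub, dotProduct_sub, dotProduct_sub, h]
  ring

/-- Radon–Nikodym derivative between the Laplace approximation
`μ_LA = N(m₀, C_LA)` and the Gaussian prior `μ = N(0, C)`, eq. (la_density). -/
theorem laplace_approximation_density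
    {n k : ℕ} (C : Matrix (Fin n) (Fin n) ℝ) (hC : C.PosDef)
    (m₀ : Fin n → ℝ)
    (D : Matrix (Fin n) (Fin k) ℝ) (hD : Dᵀ * C⁻¹ * D = 1)
    (lam : Fin k → ℝ) (hlam : ∀ j, 0 ≤ lam j) :
    (laPrecision C D lam).PosDef ∧
      gaussianOf m₀ (laPrecision C D lam)⁻¹ ≪ gaussianOf 0 C ∧
      ∀ᵐ m ∂(volume : Measure (Fin n → ℝ)),
        ((gaussianOf m₀ (laPrecision C D lam)⁻¹).rnDeriv (gaussianOf 0 C) m).toReal =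
          Real.exp (-(1 / 2) * (m₀ ⬝ᵥ C⁻¹ *ᵥ m₀) -
            (1 / 2) * (((Dᵀ * C⁻¹) *ᵥ m₀) ⬝ᵥ Matrix.diagonal lam *ᵥ ((Dᵀ * C⁻¹) *ᵥ m₀)) +
            (((Dᵀ * C⁻¹) *ᵥ m₀) ⬝ᵥ Matrix.diagonal lam *ᵥ ((Dᵀ * C⁻¹) *ᵥ m)) +
            (m₀ ⬝ᵥ C⁻¹ *ᵥ m) +
            (1 / 2) * (∑ j, Real.log (1 + lam j)) -
            (1 / 2) * (((Dᵀ * C⁻¹) *ᵥ m) ⬝ᵥ Matrix.diagonal lam *ᵥ ((Dᵀ * C⁻¹) *ᵥ m))) := by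

  classical
  set P := laPrecision C D lam with hPdef
  set L := Matrix.diagonal lam with hLdef
  set E := Dᵀ * C⁻¹ with hEdef
  -- basic matrix facts
  have hQ : (C⁻¹).PosDef := hC.inv
  have hQt : (C⁻¹)ᵀ = C⁻¹ := by
    simpa [conjTranspose_eq_transpose_of_trivial] using hQ.isHermitian.eq
  have hLps : L.PosSemidef := posSemidef_diagonal_iff.mpr hlam
  have hterm : (C⁻¹ * D * L * E).PosSemidef := by
    have := hLps.mul_mul_conjTranspose_same (C⁻¹ * D)
    simpa [hEdef, conjTranspose_eq_transpose_of_trivial, transpose_mul, hQt,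
      Matrix.mul_assoc] using this
  have hPD : P.PosDef := hQ.add_posSemidef hterm
  refine ⟨hPD, ?_⟩
  -- positivity of the product
  have hone : ∀ j, 0 < 1 + lam j := fun j => by linarith [hlam j]
  have hp : 0 < ∏ j, (1 + lam j) := Finset.prod_pos fun j _ => hone j
  -- determinant of P
  have hdetP : P.det = (C⁻¹).det * ∏ j, (1 + lam j) := by
    have hfac : P = C⁻¹ * (1 + (D * L) * E) := by
      simp [hPdef, hLdef, hEdef, laPrecision, Matrix.mul_add, Matrix.mul_assoc]
    rw [hfac, det_mul, det_one_add_mul_comm]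
    congr 1
    have h1 : E * (D * L) = L := by
      rw [hEdef, ← Matrix.mul_assoc, hD, Matrix.one_mul]
    rw [h1]
    have h2 : (1 : Matrix (Fin k) (Fin k) ℝ) + L = Matrix.diagonal (fun j => 1 + lam j) := by
      rw [hLdef, ← diagonal_one, diagonal_add]
    rw [h2, det_diagonal]
  have hdetC : 0 < C.det := hC.det_pos
  have hdetPinv : (P⁻¹).det = C.det * (∏ j, (1 + lam j))⁻¹ := by
    rw [det_nonsing_inv, Ring.inverse_eq_inv', hdetP, det_nonsing_inv, Ring.inverse_eq_inv']
    field_simp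
  -- (P⁻¹)⁻¹ = P
  have hPP : (P⁻¹)⁻¹ = P :=
    Matrix.nonsing_inv_nonsing_inv _ hPD.det_pos.ne'.isUnit
  -- constants
  set c₀ : ℝ := ((2 * π) ^ n * C.det) ^ (-(1 : ℝ) / 2) with hc₀
  set c₁ : ℝ := ((2 * π) ^ n * (P⁻¹).det) ^ (-(1 : ℝ) / 2) with hc₁
  have hπ : (0:ℝ) < (2 * π) ^ n := pow_pos (by positivity) n
  have ha : (0:ℝ) < (2 * π) ^ n * C.det := mul_pos hπ hdetC
  have hc₀pos : 0 < c₀ := Real.rpow_pos_of_pos ha _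
  have hS : Real.log (∏ j, (1 + lam j)) = ∑ j, Real.log (1 + lam j) :=
    Real.log_prod fun j _ => (hone j).ne'
  have hconst : c₁ = c₀ * Real.exp ((1/2) * ∑ j, Real.log (1 + lam j)) := by
    rw [hc₁, hdetPinv, hc₀, ← mul_assoc,
      Real.mul_rpow (le_of_lt ha) (inv_nonneg.mpr hp.le)]
    congr 1
    rw [Real.inv_rpow hp.le, ← Real.rpow_neg hp.le, Real.rpow_def_of_pos hp, hS]
    congr 1
    ring
  -- quadratic form splitting
  have hsplit : ∀ v : Fin n → ℝ,
      v ⬝ᵥ P *ᵥ v = v ⬝ᵥ C⁻¹ *ᵥ v + (E *ᵥ v) ⬝ᵥ L *ᵥ (E *ᵥ v) := by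
    intro v
    have hEt : Eᵀ = C⁻¹ * D := by rw [hEdef, transpose_mul, hQt, transpose_transpose]
    have hPeq : P = C⁻¹ + Eᵀ * (L * E) := by
      rw [hPdef, laPrecision, hEt, Matrix.mul_assoc, Matrix.mul_assoc]
    rw [hPeq, add_mulVec, dotProduct_add, ← Matrix.mulVec_mulVec,
      dotProduct_mulVec v Eᵀ, vecMul_transpose, Matrix.mulVec_mulVec]
  have hLt : Lᵀ = L := diagonal_transpose lam
  -- pointwise density identity
  have hdens : ∀ m : Fin n → ℝ,
      c₁ * Real.exp (-(1/2) * ((m - m₀) ⬝ᵥ (P⁻¹)⁻¹ *ᵥ (m - m₀))) =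
      (c₀ * Real.exp (-(1/2) * ((m - 0) ⬝ᵥ C⁻¹ *ᵥ (m - 0)))) *
      Real.exp (-(1 / 2) * (m₀ ⬝ᵥ C⁻¹ *ᵥ m₀) -
            (1 / 2) * ((E *ᵥ m₀) ⬝ᵥ L *ᵥ (E *ᵥ m₀)) +
            ((E *ᵥ m₀) ⬝ᵥ L *ᵥ (E *ᵥ m)) +
            (m₀ ⬝ᵥ C⁻¹ *ᵥ m) +
            (1 / 2) * (∑ j, Real.log (1 + lam j)) -
            (1 / 2) * ((E *ᵥ m) ⬝ᵥ L *ᵥ (E *ᵥ m))) := by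
    intro m
    rw [hPP, hconst, hsplit, sub_zero,
      symm_quad_expand (C⁻¹) hQt m m₀, mulVec_sub,
      symm_quad_expand' L hLt (E *ᵥ m) (E *ᵥ m₀),
      mul_assoc, ← Real.exp_add]
    rw [mul_assoc, ← Real.exp_add]
    congr 1
    ring
  -- measurability
  have hgR : Continuous fun m : Fin n → ℝ =>
      c₀ * Real.exp (-(1/2) * ((m - 0) ⬝ᵥ C⁻¹ *ᵥ (m - 0))) := by
    simp only [dotProduct, mulVec]
    fun_prop
  have hfR : Continuous fun m : Fin n → ℝ =>
      c₁ * Real.exp (-(1/2) * ((m - m₀) ⬝ᵥ (P⁻¹)⁻¹ *ᵥ (m - m₀))) := by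
    simp only [dotProduct, mulVec]
    fun_prop
  set T : (Fin n → ℝ) → ℝ := fun m =>
      -(1 / 2) * (m₀ ⬝ᵥ C⁻¹ *ᵥ m₀) -
        (1 / 2) * ((E *ᵥ m₀) ⬝ᵥ L *ᵥ (E *ᵥ m₀)) +
        ((E *ᵥ m₀) ⬝ᵥ L *ᵥ (E *ᵥ m)) +
        (m₀ ⬝ᵥ C⁻¹ *ᵥ m) +
        (1 / 2) * (∑ j, Real.log (1 + lam j)) -
        (1 / 2) * ((E *ᵥ m) ⬝ᵥ L *ᵥ (E *ᵥ m)) with hTdef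
  have hTR : Continuous T := by
    simp only [hTdef, dotProduct, mulVec]
    fun_prop
  set h : (Fin n → ℝ) → ENNReal := fun m => ENNReal.ofReal (Real.exp (T m)) with hhdef
  have hh : Measurable h := (Real.continuous_exp.comp hTR).measurable.ennreal_ofReal
  set g : (Fin n → ℝ) → ENNReal := fun m =>
      ENNReal.ofReal (c₀ * Real.exp (-(1/2) * ((m - 0) ⬝ᵥ C⁻¹ *ᵥ (m - 0)))) with hgdef
  have hg : Measurable g := hgR.measurable.ennreal_ofReal
  -- rewrite the LA measure as a density against the prior
  have hEq : gaussianOf m₀ (P⁻¹) = (gaussianOf 0 C).withDensity h := by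
    rw [gaussianOf, gaussianOf, ← withDensity_mul _ hg hh]
    congr 1
    funext m
    have := hdens m
    simp only [hgdef, hhdef, hc₁, hc₀, Pi.mul_apply]
    rw [← ENNReal.ofReal_mul (by positivity)]
    exact congrArg ENNReal.ofReal this
  have hac : gaussianOf m₀ (P⁻¹) ≪ gaussianOf 0 C := by
    rw [hEq]; exact withDensity_absolutelyContinuous _ _
  refine ⟨hac, ?_⟩
  -- sigma-finiteness of the prior
  have hsf : SigmaFinite (gaussianOf 0 C) :=
    SigmaFinite.withDensity_of_ne_top (ae_of_all _ fun m => ENNReal.ofReal_ne_top)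
  have hrn : (gaussianOf m₀ (P⁻¹)).rnDeriv (gaussianOf 0 C) =ᵐ[gaussianOf 0 C] h := by
    rw [hEq]; exact Measure.rnDeriv_withDensity _ hh
  -- volume ≪ prior
  have hvac : (volume : Measure (Fin n → ℝ)) ≪ gaussianOf 0 C := by
    have h0 : ∀ m, g m ≠ 0 := fun m =>
      (ENNReal.ofReal_pos.mpr (by positivity)).ne'
    have hvol : (gaussianOf 0 C).withDensity (fun m => (g m)⁻¹) = volume :=
      withDensity_inv_same hg (ae_of_all _ h0) (ae_of_all _ fun m => ENNReal.ofReal_ne_top)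
    rw [← hvol]
    exact withDensity_absolutelyContinuous _ _
  filter_upwards [hrn.filter_mono hvac.ae_le] with m hm
  rw [hm]
  exact ENNReal.toReal_ofReal (Real.exp_nonneg _)
end
end
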